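/- arXiv:1901.00914 — 7 statements merged into one kernel-verified Lean document; each statement's English description precedes it below -/
import Mathlib

section
/- Let y_1,...,y_m ∈ ℝ, a, b ∈ ℝ, λ > 0, M_y > 0, and suppose that for all 1 ≤ k ≤ l ≤ m one has |∑_{i=k}^{l} y_i| ≤ M_y·√(l−k+1). Let (x̂_1,...,x̂_m) be the minimizer over ℝ^m of G(x_1,...,x_m) = ∑_{i=1}^m (x_i − y_i)² + λ(|x_1 − a| + |x_m − b| + ∑_{i=1}^{m−1} |x_i − x_{i+1}|). Then for every 1 ≤ i ≤ m, |x̂_i| ≤ max( M_y/√i, M_y/√(m+1−i), M_y²/(4λ), 2λ/m + 2M_y/√m ). -/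
open Finset

noncomputable def FL (m : ℕ) (y : ℕ → ℝ) (a b lam : ℝ) (z : ℕ → ℝ) : ℝ :=
  ∑ i ∈ Finset.Icc 1 m, (z i - y i) ^ 2
    + lam * (|z 1 - a| + |z m - b| + ∑ i ∈ Finset.Icc 1 (m - 1), |z i - z (i + 1)|)

lemma tend_aux {A C n ε₀ : ℝ} (hε₀ : 0 < ε₀) (hn : 0 ≤ n)
    (h : ∀ ε, 0 < ε → ε ≤ ε₀ → A ≤ C + n * ε) : A ≤ C := by
  by_contra hlt
  push_neg at hlt
  set δ := A - C with hδdef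
  have hδ : 0 < δ := by simp [hδdef]; linarith
  set ε := min ε₀ (δ / (2 * (n + 1))) with hεdef
  have hεpos : 0 < ε := lt_min hε₀ (by positivity)
  have h2 := h ε hεpos (min_le_left _ _)
  have h3 : n * ε ≤ n * (δ / (2 * (n + 1))) :=
    mul_le_mul_of_nonneg_left (min_le_right _ _) hn
  have h4 : n * (δ / (2 * (n + 1))) = (n * δ) / (2 * (n + 1)) := by ring
  have h5 : (n * δ) / (2 * (n + 1)) ≤ δ / 2 := by
    rw [div_le_div_iff₀ (by positivity) (by norm_num)]
    nlinarith
  linarith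

lemma key (m p q : ℕ) (y : ℕ → ℝ) (a b lam : ℝ) (hlam : 0 < lam) (xh : ℕ → ℝ)
    (hmin : ∀ z, FL m y a b lam xh ≤ FL m y a b lam z)
    (hp : 1 ≤ p) (hpq : p ≤ q) (hq : q ≤ m)
    (hleft : p ≠ 1 → xh (p - 1) < xh p) (hright : q ≠ m → xh (q + 1) < xh q) :
    2 * ∑ j ∈ Finset.Icc p q, (xh j - y j) ≤
      lam * ((if p = 1 then 1 else -1) + (if q = m then 1 else -1)) := by
  classical
  set S := ∑ j ∈ Finset.Icc p q, (xh j - y j) with hS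
  set n : ℝ := ((Finset.Icc p q).card : ℝ) with hn
  have hn0 : 0 ≤ n := by positivity
  set εL : ℝ := if hp1 : p = 1 then 1 else xh p - xh (p - 1) with hεL
  set εR : ℝ := if hq1 : q = m then 1 else xh q - xh (q + 1) with hεR
  have hεLpos : 0 < εL := by
    rw [hεL]; split
    · norm_num
    · next h => linarith [hleft h]
  have hεRpos : 0 < εR := by
    rw [hεR]; split
    · norm_num
    · next h => linarith [hright h]
  set ε₀ : ℝ := min εL εR with hε₀
  have hε₀pos : 0 < ε₀ := lt_min hεLpos hεRpos
  apply tend_aux hε₀pos hn0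
  intro ε hεpos hεle
  have hεL' : ε ≤ εL := le_trans hεle (min_le_left _ _)
  have hεR' : ε ≤ εR := le_trans hεle (min_le_right _ _)
  set z : ℕ → ℝ := fun j => if j ∈ Finset.Icc p q then xh j - ε else xh j with hz
  have hsub : Finset.Icc p q ⊆ Finset.Icc 1 m := by
    intro x hx; simp only [Finset.mem_Icc] at *; omega
  -- quadratic part
  have hquad : ∑ i ∈ Finset.Icc 1 m, (z i - y i) ^ 2
      = ∑ i ∈ Finset.Icc 1 m, (xh i - y i) ^ 2 + (-(2 * ε * S) + n * ε ^ 2) := by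
    have h1 : ∑ i ∈ Finset.Icc 1 m, (z i - y i) ^ 2
        - ∑ i ∈ Finset.Icc 1 m, (xh i - y i) ^ 2
        = ∑ i ∈ Finset.Icc 1 m, ((z i - y i) ^ 2 - (xh i - y i) ^ 2) := by
      rw [Finset.sum_sub_distrib]
    have h2 : ∑ i ∈ Finset.Icc 1 m, ((z i - y i) ^ 2 - (xh i - y i) ^ 2)
        = ∑ i ∈ Finset.Icc p q, ((z i - y i) ^ 2 - (xh i - y i) ^ 2) := by
      refine (Finset.sum_subset hsub ?_).symm
      intro x _ hnx
      have : z x = xh x := if_neg hnx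
      rw [this]; ring
    have h3 : ∑ i ∈ Finset.Icc p q, ((z i - y i) ^ 2 - (xh i - y i) ^ 2)
        = -(2 * ε * S) + n * ε ^ 2 := by
      have : ∀ i ∈ Finset.Icc p q, (z i - y i) ^ 2 - (xh i - y i) ^ 2
          = -(2 * ε) * (xh i - y i) + ε ^ 2 := by
        intro i hi
        have : z i = xh i - ε := if_pos hi
        rw [this]; ring
      rw [Finset.sum_congr rfl this, Finset.sum_add_distrib, ← Finset.mul_sum,
        Finset.sum_const, nsmul_eq_mul, ← hS, ← hn]
      ring
    linarith [h1, h2.trans h3]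
  -- boundary 1
  have hb1 : |z 1 - a| ≤ |xh 1 - a| + (if p = 1 then ε else 0) := by
    by_cases hp1 : p = 1
    · have h1m : (1 : ℕ) ∈ Finset.Icc p q := by simp [Finset.mem_Icc]; omega
      have : z 1 = xh 1 - ε := if_pos h1m
      rw [this, if_pos hp1]
      calc |xh 1 - ε - a| = |(xh 1 - a) + (-ε)| := by ring_nf
        _ ≤ |xh 1 - a| + |(-ε)| := abs_add_le _ _
        _ = |xh 1 - a| + ε := by rw [abs_neg, abs_of_pos hεpos]
    · have h1m : (1 : ℕ) ∉ Finset.Icc p q := by simp [Finset.mem_Icc]; omega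
      have : z 1 = xh 1 := if_neg h1m
      rw [this, if_neg hp1]; simp
  have hb2 : |z m - b| ≤ |xh m - b| + (if q = m then ε else 0) := by
    by_cases hq1 : q = m
    · have h1m : m ∈ Finset.Icc p q := by simp [Finset.mem_Icc]; omega
      have : z m = xh m - ε := if_pos h1m
      rw [this, if_pos hq1]
      calc |xh m - ε - b| = |(xh m - b) + (-ε)| := by ring_nf
        _ ≤ |xh m - b| + |(-ε)| := abs_add_le _ _
        _ = |xh m - b| + ε := by rw [abs_neg, abs_of_pos hεpos]
    · have h1m : m ∉ Finset.Icc p q := by simp [Finset.mem_Icc]; omega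
      have : z m = xh m := if_neg h1m
      rw [this, if_neg hq1]; simp
  -- TV part
  have hterm : ∀ j ∈ Finset.Icc 1 (m - 1), |z j - z (j + 1)| ≤ |xh j - xh (j + 1)|
      - ((if j + 1 = p ∧ p ≠ 1 then ε else 0) + (if j = q ∧ q ≠ m then ε else 0)) := by
    intro j hj
    simp only [Finset.mem_Icc] at hj
    by_cases hc1 : j + 1 = p ∧ p ≠ 1
    · have hc2 : ¬(j = q ∧ q ≠ m) := by omega
      rw [if_pos hc1, if_neg hc2]
      have hjn : j ∉ Finset.Icc p q := by simp [Finset.mem_Icc]; omega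
      have hjn2 : j + 1 ∈ Finset.Icc p q := by simp [Finset.mem_Icc]; omega
      have hz1 : z j = xh j := if_neg hjn
      have hz2 : z (j + 1) = xh (j + 1) - ε := if_pos hjn2
      have hd : xh (p - 1) < xh p := hleft hc1.2
      have hpj : p - 1 = j := by omega
      have hpj2 : p = j + 1 := by omega
      rw [hpj, hpj2] at hd
      have hεle2 : ε ≤ xh (j + 1) - xh j := by
        have : εL = xh (j+1) - xh j := by rw [hεL, dif_neg hc1.2, hpj, hpj2]
        linarith
      rw [hz1, hz2, abs_of_nonpos (by linarith), abs_of_nonpos (by linarith)]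
      linarith
    · by_cases hc2 : j = q ∧ q ≠ m
      · rw [if_neg hc1, if_pos hc2]
        have hjn : j ∈ Finset.Icc p q := by simp [Finset.mem_Icc]; omega
        have hjn2 : j + 1 ∉ Finset.Icc p q := by simp [Finset.mem_Icc]; omega
        have hz1 : z j = xh j - ε := if_pos hjn
        have hz2 : z (j + 1) = xh (j + 1) := if_neg hjn2
        have hd : xh (q + 1) < xh q := hright hc2.2
        have hqj : q = j := hc2.1.symm
        rw [hqj] at hd
        have hεle2 : ε ≤ xh j - xh (j + 1) := by
          have : εR = xh j - xh (j+1) := by rw [hεR, dif_neg hc2.2, hqj]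
          linarith
        rw [hz1, hz2, abs_of_nonneg (by linarith), abs_of_nonneg (by linarith)]
        linarith
      · rw [if_neg hc1, if_neg hc2]
        have : z j - z (j + 1) = xh j - xh (j + 1) := by
          by_cases hin : j ∈ Finset.Icc p q
          · have hin2 : j + 1 ∈ Finset.Icc p q := by
              simp only [Finset.mem_Icc] at *; omega
            have e1 : z j = xh j - ε := if_pos hin
            have e2 : z (j + 1) = xh (j + 1) - ε := if_pos hin2
            rw [e1, e2]; ring
          · have hin2 : j + 1 ∉ Finset.Icc p q := by
              simp only [Finset.mem_Icc] at *; omega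
            have e1 : z j = xh j := if_neg hin
            have e2 : z (j + 1) = xh (j + 1) := if_neg hin2
            rw [e1, e2]
        rw [this]; simp
  have hTV : ∑ j ∈ Finset.Icc 1 (m - 1), |z j - z (j + 1)|
      ≤ ∑ j ∈ Finset.Icc 1 (m - 1), |xh j - xh (j + 1)|
        - ((if p = 1 then 0 else ε) + (if q = m then 0 else ε)) := by
    have h1 := Finset.sum_le_sum hterm
    have h2 : ∑ j ∈ Finset.Icc 1 (m - 1),
        (|xh j - xh (j + 1)| - ((if j + 1 = p ∧ p ≠ 1 then ε else 0)
          + (if j = q ∧ q ≠ m then ε else 0)))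
        = ∑ j ∈ Finset.Icc 1 (m - 1), |xh j - xh (j + 1)|
          - (∑ j ∈ Finset.Icc 1 (m - 1), (if j + 1 = p ∧ p ≠ 1 then ε else 0)
            + ∑ j ∈ Finset.Icc 1 (m - 1), (if j = q ∧ q ≠ m then ε else 0)) := by
      rw [Finset.sum_sub_distrib, Finset.sum_add_distrib]
    have h3 : ∑ j ∈ Finset.Icc 1 (m - 1), (if j + 1 = p ∧ p ≠ 1 then ε else 0)
        = (if p = 1 then 0 else ε) := by
      by_cases hp1 : p = 1
      · rw [if_pos hp1]
        apply Finset.sum_eq_zero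
        intro j hj
        rw [if_neg (by omega)]
      · rw [if_neg hp1]
        have : ∀ j ∈ Finset.Icc 1 (m-1), (if j + 1 = p ∧ p ≠ 1 then ε else 0)
            = if j = p - 1 then ε else 0 := by
          intro j hj
          by_cases h : j = p - 1
          · rw [if_pos h, if_pos (by omega)]
          · rw [if_neg h, if_neg (by omega)]
        rw [Finset.sum_congr rfl this, Finset.sum_ite_eq' (Finset.Icc 1 (m-1)) (p-1)]
        rw [if_pos (by simp [Finset.mem_Icc]; omega)]
    have h4 : ∑ j ∈ Finset.Icc 1 (m - 1), (if j = q ∧ q ≠ m then ε else 0)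
        = (if q = m then 0 else ε) := by
      by_cases hq1 : q = m
      · rw [if_pos hq1]
        apply Finset.sum_eq_zero
        intro j hj
        rw [if_neg (by omega)]
      · rw [if_neg hq1]
        have : ∀ j ∈ Finset.Icc 1 (m-1), (if j = q ∧ q ≠ m then ε else 0)
            = if j = q then ε else 0 := by
          intro j hj
          by_cases h : j = q
          · rw [if_pos h, if_pos (by omega)]
          · rw [if_neg h, if_neg (by omega)]
        rw [Finset.sum_congr rfl this, Finset.sum_ite_eq' (Finset.Icc 1 (m-1)) q]
        rw [if_pos (by simp [Finset.mem_Icc]; omega)]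
    rw [h2, h3, h4] at h1
    exact h1
  -- assemble
  have habs : |z 1 - a| + |z m - b| + ∑ j ∈ Finset.Icc 1 (m - 1), |z j - z (j + 1)|
      ≤ |xh 1 - a| + |xh m - b| + ∑ j ∈ Finset.Icc 1 (m - 1), |xh j - xh (j + 1)|
        + (((if p = 1 then ε else 0) - (if p = 1 then 0 else ε))
          + ((if q = m then ε else 0) - (if q = m then 0 else ε))) := by
    linarith
  have hmul := mul_le_mul_of_nonneg_left habs (le_of_lt hlam)
  have hFz := hmin z
  rw [FL, FL] at hFz
  have hif : (((if p = 1 then ε else 0) - (if p = 1 then 0 else ε))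
          + ((if q = m then ε else 0) - (if q = m then 0 else ε)))
      = ((if p = 1 then (1:ℝ) else -1) + (if q = m then 1 else -1)) * ε := by
    by_cases hp1 : p = 1 <;> by_cases hq1 : q = m <;> simp [hp1, hq1] <;> ring
  have hfinal : 2 * ε * S ≤ lam * ((if p = 1 then (1:ℝ) else -1)
      + (if q = m then 1 else -1)) * ε + n * ε ^ 2 := by
    rw [hif] at hmul
    nlinarith [hquad, hmul, hFz]
  have := le_of_mul_le_mul_right (by nlinarith [hfinal] :
      (2 * S) * ε ≤ (lam * ((if p = 1 then (1:ℝ) else -1) + (if q = m then 1 else -1))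
        + n * ε) * ε) hεpos
  linarith

set_option maxHeartbeats 2000000 in
lemma one_sided (m : ℕ) (hm : 1 ≤ m) (y : ℕ → ℝ) (a b lam My : ℝ)
    (hlam : 0 < lam) (hMy : 0 < My)
    (hy : ∀ k l : ℕ, 1 ≤ k → k ≤ l → l ≤ m →
      |∑ i ∈ Finset.Icc k l, y i| ≤ My * Real.sqrt (l - k + 1))
    (xh : ℕ → ℝ) (hmin : ∀ z, FL m y a b lam xh ≤ FL m y a b lam z) :
    ∀ i : ℕ, 1 ≤ i → i ≤ m →
      xh i ≤ max (max (My / Real.sqrt i) (My / Real.sqrt (m + 1 - i)))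
        (max (My ^ 2 / (4 * lam)) (2 * lam / m + 2 * My / Real.sqrt m)) := by
  classical
  intro i h1i him
  -- define q : least j ≥ i with (j = m or drop at j)
  have hQ : ∃ j, i ≤ j ∧ (j = m ∨ xh (j + 1) < xh j) := ⟨m, him, Or.inl rfl⟩
  set q := Nat.find hQ with hqdef
  obtain ⟨hiq, hqspec⟩ := Nat.find_spec hQ
  rw [← hqdef] at hiq hqspec
  have hqm : q ≤ m := Nat.find_min' hQ ⟨him, Or.inl rfl⟩
  -- monotone nondecreasing on [i, q]
  have hmonoR : ∀ j, i ≤ j → j ≤ q → xh i ≤ xh j := by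
    intro j
    induction j with
    | zero => intro hij _; rw [show i = 0 by omega]
    | succ j ih =>
      intro hij hjq
      by_cases hij' : i = j + 1
      · rw [← hij']
      · have hij2 : i ≤ j := by omega
        have hjq2 : j < q := by omega
        have hnot := Nat.find_min hQ hjq2
        push_neg at hnot
        obtain ⟨_, hstep⟩ := hnot hij2
        have := ih hij2 (by omega)
        linarith [hstep]
  clear_value q
  -- define p via findGreatest
  set p := Nat.findGreatest (fun j => 1 ≤ j ∧ (j = 1 ∨ xh (j - 1) < xh j)) i with hpdef
  have hP1 : (fun j => 1 ≤ j ∧ (j = 1 ∨ xh (j - 1) < xh j)) 1 := ⟨le_refl 1, Or.inl rfl⟩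
  have h1p : 1 ≤ p := Nat.le_findGreatest h1i hP1
  have hpi : p ≤ i := Nat.findGreatest_le i
  obtain ⟨_, hpspec⟩ : 1 ≤ p ∧ (p = 1 ∨ xh (p - 1) < xh p) := by
    exact Nat.findGreatest_spec (P := fun j => 1 ≤ j ∧ (j = 1 ∨ xh (j - 1) < xh j)) h1i hP1
  -- monotone: xh i ≤ xh j for p ≤ j ≤ i
  have hchainL : ∀ j, p ≤ j → j < i → xh (j + 1) ≤ xh j := by
    intro j hpj hji
    have hnot : ¬(1 ≤ j + 1 ∧ (j + 1 = 1 ∨ xh (j + 1 - 1) < xh (j + 1))) :=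
      Nat.findGreatest_is_greatest (P := fun j => 1 ≤ j ∧ (j = 1 ∨ xh (j - 1) < xh j))
        (n := i) (k := j + 1) (by omega) (by omega)
    by_contra hcon
    push_neg at hcon
    exact hnot ⟨by omega, Or.inr (by simpa using hcon)⟩
  clear_value p
  have hmonoL : ∀ d j, j + d = i → p ≤ j → xh i ≤ xh j := by
    intro d
    induction d with
    | zero => intro j hj _; rw [show j = i by omega]
    | succ d ih =>
      intro j hj hpj
      have h1 := ih (j + 1) (by omega) (by omega)
      have h2 := hchainL j hpj (by omega)
      linarith
  -- all values on [p,q] are ≥ xh i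
  have hge : ∀ j ∈ Finset.Icc p q, xh i ≤ xh j := by
    intro j hj
    simp only [Finset.mem_Icc] at hj
    by_cases hc : i ≤ j
    · exact hmonoR j hc hj.2
    · exact hmonoL (i - j) j (by omega) hj.1
  -- apply key
  have hkey := key m p q y a b lam hlam xh hmin h1p (le_trans hpi hiq) hqm
    (fun hne => hpspec.resolve_left hne)
    (fun hne => hqspec.resolve_left hne)
  -- sums
  set n : ℕ := q + 1 - p with hndef
  have hn1 : 1 ≤ n := by omega
  have hcard : (Finset.Icc p q).card = n := by rw [Nat.card_Icc]
  have hnR : ((n : ℝ)) = (q : ℝ) - p + 1 := by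
    push_cast [hndef, Nat.cast_sub (by omega : p ≤ q + 1)]; ring
  have hnpos : (0 : ℝ) < n := by positivity
  have hsq : Real.sqrt n * Real.sqrt n = (n : ℝ) := Real.mul_self_sqrt (by positivity)
  have hsqpos : 0 < Real.sqrt n := Real.sqrt_pos.mpr hnpos
  have hylow : ∑ j ∈ Finset.Icc p q, y j ≤ My * Real.sqrt n := by
    have := hy p q h1p (le_trans hpi hiq) hqm
    rw [← hnR] at this
    have := abs_le.mp this
    linarith [this.2]
  have hsumge : (n : ℝ) * xh i ≤ ∑ j ∈ Finset.Icc p q, xh j := by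
    have := Finset.card_nsmul_le_sum (Finset.Icc p q) xh (xh i) hge
    rwa [hcard, nsmul_eq_mul] at this
  have hsplit : ∑ j ∈ Finset.Icc p q, (xh j - y j)
      = ∑ j ∈ Finset.Icc p q, xh j - ∑ j ∈ Finset.Icc p q, y j :=
    Finset.sum_sub_distrib _ _
  -- main bound: n * xh i ≤ My * sqrt n + lam * (eL + eR) / 2
  have hmain : (n : ℝ) * xh i ≤ My * Real.sqrt n
      + lam * ((if p = 1 then 1 else -1) + (if q = m then 1 else -1)) / 2 := by
    rw [hsplit] at hkey
    linarith
  set B := max (max (My / Real.sqrt i) (My / Real.sqrt ((m : ℝ) + 1 - i)))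
    (max (My ^ 2 / (4 * lam)) (2 * lam / m + 2 * My / Real.sqrt m)) with hBdef
  have hB1 : My / Real.sqrt i ≤ B := le_trans (le_max_left _ _) (le_max_left _ _)
  have hB2 : My / Real.sqrt ((m:ℝ) + 1 - i) ≤ B := le_trans (le_max_right _ _) (le_max_left _ _)
  have hB3 : My ^ 2 / (4 * lam) ≤ B := le_trans (le_max_left _ _) (le_max_right _ _)
  have hB4 : 2 * lam / m + 2 * My / Real.sqrt m ≤ B := le_trans (le_max_right _ _) (le_max_right _ _)
  have hfin : (n : ℝ) * xh i ≤ (n : ℝ) * B → xh i ≤ B := by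
    intro h
    exact le_of_mul_le_mul_left h hnpos
  clear_value n B
  apply hfin
  by_cases hp1 : p = 1 <;> by_cases hq1 : q = m
  · -- p = 1, q = m : n = m
    have hnm : n = m := by omega
    rw [if_pos hp1, if_pos hq1] at hmain
    have hsqm : Real.sqrt m = Real.sqrt n := by rw [hnm]
    have : My * Real.sqrt n + lam * (1 + 1) / 2 ≤ (n:ℝ) * (2 * lam / m + 2 * My / Real.sqrt m) := by
      rw [hsqm, hnm]
      have hmpos : (0:ℝ) < m := by exact_mod_cast hm
      have hsqn : Real.sqrt m * Real.sqrt m = (m:ℝ) := Real.mul_self_sqrt (by positivity)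
      have hsqpos' : 0 < Real.sqrt m := Real.sqrt_pos.mpr hmpos
      have e1 : (m:ℝ) * (2 * lam / m) = 2 * lam := by field_simp
      have e2 : (m:ℝ) * (2 * My / Real.sqrt m) = 2 * My * Real.sqrt m := by
        rw [mul_div_assoc', div_eq_iff (ne_of_gt hsqpos')]
        nlinarith [hsqn]
      have e3 : (m:ℝ) * (2 * lam / m + 2 * My / Real.sqrt m)
          = 2 * lam + 2 * My * Real.sqrt m := by rw [mul_add, e1, e2]
      rw [e3]
      nlinarith [hsqpos', hMy]
    calc (n : ℝ) * xh i ≤ My * Real.sqrt n + lam * (1 + 1) / 2 := hmain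
      _ ≤ (n:ℝ) * (2 * lam / m + 2 * My / Real.sqrt m) := this
      _ ≤ (n:ℝ) * B := mul_le_mul_of_nonneg_left hB4 hnpos.le
  · -- p = 1, q < m : n = q ≥ i
    have hni : (i:ℝ) ≤ (n:ℝ) := by exact_mod_cast (by omega : i ≤ n)
    rw [if_pos hp1, if_neg hq1] at hmain
    have hipos : (0:ℝ) < i := by exact_mod_cast h1i
    have hsqipos : 0 < Real.sqrt i := Real.sqrt_pos.mpr hipos
    have hsqle : Real.sqrt i ≤ Real.sqrt n := Real.sqrt_le_sqrt hni
    have hprod : My * Real.sqrt n * Real.sqrt i ≤ My * Real.sqrt n * Real.sqrt n :=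
      mul_le_mul_of_nonneg_left hsqle (by positivity)
    have h2 : My * Real.sqrt n ≤ (n:ℝ) * (My / Real.sqrt i) := by
      rw [mul_div_assoc', le_div_iff₀ hsqipos]
      calc My * Real.sqrt n * Real.sqrt i ≤ My * Real.sqrt n * Real.sqrt n := hprod
        _ = My * (n:ℝ) := by rw [mul_assoc, hsq]
        _ = (n:ℝ) * My := mul_comm _ _
    have h3 : (n:ℝ) * (My / Real.sqrt i) ≤ (n:ℝ) * B := mul_le_mul_of_nonneg_left hB1 hnpos.le
    calc (n:ℝ) * xh i ≤ My * Real.sqrt n + lam * (1 + -1) / 2 := hmain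
      _ = My * Real.sqrt n := by ring
      _ ≤ (n:ℝ) * B := le_trans h2 h3
  · -- p > 1, q = m : n = m + 1 - p ≥ m + 1 - i
    have hni : (m:ℝ) + 1 - i ≤ (n:ℝ) := by
      rw [hnR]
      have : (p:ℝ) ≤ i := by exact_mod_cast hpi
      have : (q:ℝ) = m := by exact_mod_cast hq1
      linarith
    rw [if_neg hp1, if_pos hq1] at hmain
    have hipos : (0:ℝ) < (m:ℝ) + 1 - i := by
      have h1 : (i:ℝ) ≤ m := by exact_mod_cast him
      linarith
    have hsqipos : 0 < Real.sqrt ((m:ℝ) + 1 - i) := Real.sqrt_pos.mpr hipos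
    have hsqle : Real.sqrt ((m:ℝ) + 1 - i) ≤ Real.sqrt n := Real.sqrt_le_sqrt hni
    have hprod : My * Real.sqrt n * Real.sqrt ((m:ℝ) + 1 - i) ≤ My * Real.sqrt n * Real.sqrt n :=
      mul_le_mul_of_nonneg_left hsqle (by positivity)
    have h2 : My * Real.sqrt n ≤ (n:ℝ) * (My / Real.sqrt ((m:ℝ) + 1 - i)) := by
      rw [mul_div_assoc', le_div_iff₀ hsqipos]
      calc My * Real.sqrt n * Real.sqrt ((m:ℝ) + 1 - i)
          ≤ My * Real.sqrt n * Real.sqrt n := hprod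
        _ = My * (n:ℝ) := by rw [mul_assoc, hsq]
        _ = (n:ℝ) * My := mul_comm _ _
    have h3 : (n:ℝ) * (My / Real.sqrt ((m:ℝ) + 1 - i)) ≤ (n:ℝ) * B := mul_le_mul_of_nonneg_left hB2 hnpos.le
    calc (n:ℝ) * xh i ≤ My * Real.sqrt n + lam * (-1 + 1) / 2 := hmain
      _ = My * Real.sqrt n := by ring
      _ ≤ (n:ℝ) * B := le_trans h2 h3
  · -- p > 1, q < m : AM-GM case
    rw [if_neg hp1, if_neg hq1] at hmain
    have h2 : My * Real.sqrt n - lam ≤ (n:ℝ) * (My ^ 2 / (4 * lam)) := by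
      have key2 : 4 * lam * (My * Real.sqrt n - lam) ≤ My ^ 2 * (n:ℝ) := by
        nlinarith [sq_nonneg (My * Real.sqrt n - 2 * lam), hsq, sq_nonneg My]
      rw [mul_div_assoc', le_div_iff₀ (by positivity : (0:ℝ) < 4 * lam)]
      nlinarith [key2]
    have h3 : (n:ℝ) * (My ^ 2 / (4 * lam)) ≤ (n:ℝ) * B := mul_le_mul_of_nonneg_left hB3 hnpos.le
    calc (n:ℝ) * xh i ≤ My * Real.sqrt n + lam * (-1 + -1) / 2 := hmain
      _ = My * Real.sqrt n - lam := by ring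
      _ ≤ (n:ℝ) * B := le_trans h2 h3

lemma FL_neg (m : ℕ) (y : ℕ → ℝ) (a b lam : ℝ) (w : ℕ → ℝ) :
    FL m (fun j => -y j) (-a) (-b) lam w = FL m y a b lam (fun j => -w j) := by
  rw [FL, FL]
  congr 1
  · apply Finset.sum_congr rfl
    intro i _
    ring
  · congr 1
    congr 1
    · congr 1
      · rw [← abs_neg]; ring_nf
      · rw [← abs_neg]; ring_nf
    · apply Finset.sum_congr rfl
      intro i _
      rw [← abs_neg]; ring_nf

/-- element-wise bound for the one-interval fused lasso minimizer. -/
theorem fused_lasso_one_interval_elementwise_bound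
    (m : ℕ) (hm : 1 ≤ m)
    (y : ℕ → ℝ) (a b : ℝ) (lam My : ℝ) (hlam : 0 < lam) (hMy : 0 < My)
    (hy : ∀ k l : ℕ, 1 ≤ k → k ≤ l → l ≤ m →
      |∑ i ∈ Finset.Icc k l, y i| ≤ My * Real.sqrt (l - k + 1))
    (G : (ℕ → ℝ) → ℝ)
    (hG : ∀ z : ℕ → ℝ, G z =
      ∑ i ∈ Finset.Icc 1 m, (z i - y i) ^ 2
        + lam * (|z 1 - a| + |z m - b| + ∑ i ∈ Finset.Icc 1 (m - 1), |z i - z (i + 1)|))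
    (xh : ℕ → ℝ) (hmin : ∀ z : ℕ → ℝ, G xh ≤ G z) :
    ∀ i : ℕ, 1 ≤ i → i ≤ m →
      |xh i| ≤ max (max (My / Real.sqrt i) (My / Real.sqrt (m + 1 - i)))
        (max (My ^ 2 / (4 * lam)) (2 * lam / m + 2 * My / Real.sqrt m)) := by
  intro i h1i him
  have hmin' : ∀ z, FL m y a b lam xh ≤ FL m y a b lam z := by
    intro z
    have := hmin z
    rwa [hG, hG] at this
  have hupper := one_sided m hm y a b lam My hlam hMy hy xh hmin' i h1i him
  -- lower bound via negation
  have hy' : ∀ k l : ℕ, 1 ≤ k → k ≤ l → l ≤ m →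
      |∑ i ∈ Finset.Icc k l, (fun j => -y j) i| ≤ My * Real.sqrt (l - k + 1) := by
    intro k l hk hkl hlm
    simpa [Finset.sum_neg_distrib] using hy k l hk hkl hlm
  have hmin'' : ∀ z, FL m (fun j => -y j) (-a) (-b) lam (fun j => -xh j)
      ≤ FL m (fun j => -y j) (-a) (-b) lam z := by
    intro z
    rw [FL_neg, FL_neg]
    have h2 : (fun j => - - xh j) = xh := by funext j; ring
    rw [h2]
    exact hmin' _
  have hlower := one_sided m hm (fun j => -y j) (-a) (-b) lam My hlam hMy hy'
    (fun j => -xh j) hmin'' i h1i him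
  exact abs_le.mpr ⟨by linarith, hupper⟩
end

section
/- Let ε_1,...,ε_n be i.i.d. random variables with distribution N(0, σ²), let t > 0, and set M_y = 2σ√(log n + log t). Then with probability at least 1 − 1/t², for all pairs 1 ≤ k ≤ l ≤ n one has |∑_{i=k}^{l} ε_i| ≤ M_y·√(l−k+1). -/
open Finset MeasureTheory ProbabilityTheory
open scoped NNReal ENNReal

section AuxGaussian

open Real

lemma gaussianPDFReal_mul_eq (μ₁ μ₂ : ℝ) {p q : ℝ≥0} (hp : p ≠ 0) (hq : q ≠ 0) (z x : ℝ) :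
    gaussianPDFReal μ₁ p x * gaussianPDFReal μ₂ q (z - x) =
      gaussianPDFReal (μ₁ + μ₂) (p + q) z *
      gaussianPDFReal (μ₁ + p * (z - μ₁ - μ₂) / (p + q)) (p * q / (p + q)) x := by
  have hp' : (0:ℝ) < p := lt_of_le_of_ne p.coe_nonneg (by exact_mod_cast (Ne.symm hp))
  have hq' : (0:ℝ) < q := lt_of_le_of_ne q.coe_nonneg (by exact_mod_cast (Ne.symm hq))
  have hpq : (0:ℝ) < (p:ℝ) + q := by linarith
  simp only [gaussianPDFReal]
  push_cast
  rw [mul_mul_mul_comm, mul_mul_mul_comm ((√(2 * π * ((p:ℝ) + q)))⁻¹),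
    ← Real.exp_add, ← Real.exp_add, ← mul_inv, ← mul_inv,
    ← Real.sqrt_mul (by positivity), ← Real.sqrt_mul (by positivity)]
  congr 2
  · field_simp
  · field_simp
    ring

lemma map_add_gaussian (μ₁ μ₂ : ℝ) {p q : ℝ≥0} (hp : p ≠ 0) (hq : q ≠ 0) :
    Measure.map (fun x : ℝ × ℝ => x.1 + x.2) ((gaussianReal μ₁ p).prod (gaussianReal μ₂ q)) =
      gaussianReal (μ₁ + μ₂) (p + q) := by
  have hpq : p + q ≠ 0 := by simp [hp]
  have hr : p * q / (p + q) ≠ 0 := by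
    simp [div_eq_zero_iff, hp, hq, hpq]
  ext s hs
  rw [Measure.map_apply measurable_add hs, Measure.prod_apply (measurable_add hs)]
  have h1 : ∀ x : ℝ, (gaussianReal μ₂ q) (Prod.mk x ⁻¹' ((fun p : ℝ × ℝ => p.1 + p.2) ⁻¹' s))
      = ∫⁻ z in s, gaussianPDF (μ₂ + x) q z := by
    intro x
    have : Prod.mk x ⁻¹' ((fun p : ℝ × ℝ => p.1 + p.2) ⁻¹' s) = (fun y => x + y) ⁻¹' s := rfl
    rw [this, ← Measure.map_apply (measurable_const_add x) hs, gaussianReal_map_const_add,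
      gaussianReal_apply _ hq]
  simp_rw [h1]
  -- joint measurability
  have hmeas2 : Measurable (Function.uncurry fun x z => gaussianPDF (μ₂ + x) q z) := by
    have : (Function.uncurry fun x z => gaussianPDF (μ₂ + x) q z)
        = fun v : ℝ × ℝ => ENNReal.ofReal (gaussianPDFReal μ₂ q (v.2 - v.1)) := by
      funext v
      simp [Function.uncurry, gaussianPDF, gaussianPDFReal_sub, add_comm]
    rw [this]
    exact ((measurable_gaussianPDFReal μ₂ q).comp (measurable_snd.sub measurable_fst)).ennreal_ofReal
  have hmg : Measurable fun x => ∫⁻ z in s, gaussianPDF (μ₂ + x) q z :=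
    Measurable.lintegral_prod_right (ν := volume.restrict s) hmeas2
  rw [gaussianReal_of_var_ne_zero _ hp,
    lintegral_withDensity_eq_lintegral_mul _ (measurable_gaussianPDF μ₁ p) hmg]
  simp only [Pi.mul_apply]
  have h2 : ∀ x : ℝ, gaussianPDF μ₁ p x * ∫⁻ z in s, gaussianPDF (μ₂ + x) q z
      = ∫⁻ z in s, gaussianPDF μ₁ p x * gaussianPDF (μ₂ + x) q z := by
    intro x
    rw [← lintegral_const_mul _ ((measurable_gaussianPDF _ q))]
  simp_rw [h2]
  rw [lintegral_lintegral_swap]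
  · have h3 : ∀ z : ℝ, (∫⁻ x, gaussianPDF μ₁ p x * gaussianPDF (μ₂ + x) q z)
        = gaussianPDF (μ₁ + μ₂) (p + q) z := by
      intro z
      have hpt : ∀ x : ℝ, gaussianPDF μ₁ p x * gaussianPDF (μ₂ + x) q z
          = ENNReal.ofReal (gaussianPDFReal (μ₁ + μ₂) (p + q) z *
              gaussianPDFReal (μ₁ + p * (z - μ₁ - μ₂) / (p + q)) (p * q / (p + q)) x) := by
        intro x
        rw [gaussianPDF, gaussianPDF, ← ENNReal.ofReal_mul (gaussianPDFReal_nonneg _ _ _)]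
        congr 1
        rw [← gaussianPDFReal_sub, ← gaussianPDFReal_mul_eq μ₁ μ₂ hp hq z x]
      simp_rw [hpt]
      rw [← ofReal_integral_eq_lintegral_ofReal
        (((integrable_gaussianPDFReal _ _).const_mul _))
        (ae_of_all _ (fun x => mul_nonneg (gaussianPDFReal_nonneg _ _ _)
          (gaussianPDFReal_nonneg _ _ _))),
        integral_const_mul, integral_gaussianPDFReal_eq_one _ hr, mul_one, gaussianPDF]
    simp_rw [h3]
    rw [← gaussianReal_apply _ hpq s]
  · exact (((measurable_gaussianPDF μ₁ p).comp measurable_fst).mul hmeas2).aemeasurable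

lemma indepFun_add_gaussian {Ω : Type*} [MeasurableSpace Ω] {P : Measure Ω}
    [IsProbabilityMeasure P] {X Y : Ω → ℝ} (hX : Measurable X) (hY : Measurable Y)
    (h : IndepFun X Y P) {μ₁ μ₂ : ℝ} {p q : ℝ≥0} (hp : p ≠ 0) (hq : q ≠ 0)
    (h1 : P.map X = gaussianReal μ₁ p) (h2 : P.map Y = gaussianReal μ₂ q) :
    P.map (fun ω => X ω + Y ω) = gaussianReal (μ₁ + μ₂) (p + q) := by
  have hprod := (indepFun_iff_map_prod_eq_prod_map_map hX.aemeasurable hY.aemeasurable).mp h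
  have : P.map (fun ω => X ω + Y ω)
      = Measure.map (fun x : ℝ × ℝ => x.1 + x.2) (P.map fun ω => (X ω, Y ω)) := by
    rw [Measure.map_map measurable_add (hX.prodMk hY)]
    rfl
  rw [this, hprod, h1, h2, map_add_gaussian _ _ hp hq]

lemma sum_gaussian {Ω ι : Type*} [MeasurableSpace Ω] (P : Measure Ω) [IsProbabilityMeasure P]
    (f : ι → Ω → ℝ) (hmeas : ∀ i, Measurable (f i)) (v : ℝ≥0) (hv : v ≠ 0)
    (hindep : iIndepFun f P)
    (T : Finset ι) (hT : T.Nonempty) (hlaw : ∀ i ∈ T, P.map (f i) = gaussianReal 0 v) :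
    P.map (fun ω => ∑ i ∈ T, f i ω) = gaussianReal 0 ((T.card : ℝ≥0) * v) := by
  classical
  induction hT using Finset.Nonempty.cons_induction with
  | singleton i => simpa using hlaw i (by simp)
  | cons a s ha hs ih =>
    have hind : IndepFun (∑ j ∈ s, f j) (f a) P :=
      hindep.indepFun_finsetSum_of_notMem hmeas ha
    have hsum_meas : Measurable (fun ω => ∑ j ∈ s, f j ω) :=
      Finset.measurable_sum _ (fun i _ => hmeas i)
    have hind' : IndepFun (fun ω => ∑ j ∈ s, f j ω) (f a) P := by
      have : (∑ j ∈ s, f j) = fun ω => ∑ j ∈ s, f j ω := by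
        funext ω; simp [Finset.sum_apply]
      rwa [this] at hind
    have ihs := ih (fun i hi => hlaw i (Finset.mem_cons_of_mem hi))
    have hcard : ((s.card : ℝ≥0)) ≠ 0 := by
      simpa using Finset.card_ne_zero_of_mem hs.choose_spec
    have hkey := indepFun_add_gaussian hsum_meas (hmeas a) hind'
      (mul_ne_zero hcard hv) hv ihs (hlaw a (Finset.mem_cons_self a s))
    have heq : (fun ω => ∑ i ∈ Finset.cons a s ha, f i ω)
        = fun ω => (∑ j ∈ s, f j ω) + f a ω := by
      funext ω; rw [Finset.sum_cons]; ring
    rw [heq, hkey]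
    congr 1
    · ring
    · rw [Finset.card_cons]
      push_cast
      ring

lemma gaussian_neg_symm (v : ℝ≥0) : Measure.map (fun x : ℝ => -x) (gaussianReal 0 v)
    = gaussianReal 0 v := by
  have h := gaussianReal_map_const_mul (μ := 0) (v := v) (-1)
  have h2 : (fun x : ℝ => (-1) * x) = fun x : ℝ => -x := by funext x; ring
  rw [h2] at h
  rw [h]
  norm_num

lemma gaussian_half (v : ℝ≥0) (hv : v ≠ 0) : gaussianReal 0 v (Set.Ici 0) = 1/2 := by
  have hzero : gaussianReal 0 v {(0:ℝ)} = 0 :=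
    gaussianReal_absolutelyContinuous 0 hv (measure_singleton 0)
  have hsymm : gaussianReal 0 v (Set.Iic 0) = gaussianReal 0 v (Set.Ici 0) := by
    conv_lhs => rw [← gaussian_neg_symm v]
    rw [Measure.map_apply measurable_neg measurableSet_Iic]
    congr 1
    ext x
    simp
  have hcompl : gaussianReal 0 v (Set.Ici 0) + gaussianReal 0 v (Set.Iio 0) = 1 := by
    rw [← measure_univ (μ := gaussianReal 0 v), ← Set.compl_Ici (a := (0:ℝ)),
      measure_add_measure_compl measurableSet_Ici]
  have hio : gaussianReal 0 v (Set.Iic 0) = gaussianReal 0 v (Set.Iio 0) := by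
    have hu : Set.Iic (0:ℝ) = Set.Iio 0 ∪ {0} := by
      ext x; simp [le_iff_lt_or_eq]
    rw [hu]
    refine le_antisymm (le_trans (measure_union_le _ _) ?_)
      (measure_mono Set.subset_union_left)
    rw [hzero, add_zero]
  have h2 : 2 * gaussianReal 0 v (Set.Ici 0) = 1 := by
    rw [two_mul]
    nth_rewrite 2 [← hsymm]
    rw [hio, hcompl]
  rw [ENNReal.eq_div_iff (by norm_num) (by norm_num), h2]

lemma gaussian_tail_Ici (v : ℝ≥0) (hv : v ≠ 0) {a : ℝ} (ha : 0 ≤ a) :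
    gaussianReal 0 v (Set.Ici a) ≤ ENNReal.ofReal (Real.exp (-a^2/(2*v)) / 2) := by
  have h1 : gaussianReal 0 v (Set.Ici a) = gaussianReal (-a) v (Set.Ici 0) := by
    have hmap := gaussianReal_map_add_const (μ := 0) (v := v) (-a)
    rw [zero_add] at hmap
    rw [← hmap, Measure.map_apply (measurable_add_const _) measurableSet_Ici]
    congr 1
    ext x
    simp [le_sub_iff_add_le]
  rw [h1, gaussianReal_apply _ hv]
  have hbound : ∀ x ∈ Set.Ici (0:ℝ), gaussianPDF (-a) v x
      ≤ ENNReal.ofReal (Real.exp (-a^2/(2*v))) * gaussianPDF 0 v x := by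
    intro x hx
    rw [gaussianPDF, gaussianPDF, ← ENNReal.ofReal_mul (Real.exp_nonneg _)]
    apply ENNReal.ofReal_le_ofReal
    simp only [gaussianPDFReal, sub_neg_eq_add, sub_zero]
    rw [mul_comm (Real.exp _), mul_assoc]
    rw [mul_assoc]
    refine mul_le_mul_of_nonneg_left ?_ (by positivity)
    rw [← Real.exp_add]
    apply Real.exp_le_exp.mpr
    have hv' : (0:ℝ) < v := lt_of_le_of_ne v.coe_nonneg (by exact_mod_cast (Ne.symm hv))
    rw [← add_div, div_le_div_iff_of_pos_right (by linarith)]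
    nlinarith [Set.mem_Ici.mp hx]
  calc ∫⁻ x in Set.Ici 0, gaussianPDF (-a) v x
      ≤ ∫⁻ x in Set.Ici 0, ENNReal.ofReal (Real.exp (-a^2/(2*v))) * gaussianPDF 0 v x := by
        exact setLIntegral_mono ((measurable_gaussianPDF 0 v).const_mul _) hbound
    _ = ENNReal.ofReal (Real.exp (-a^2/(2*v))) * ∫⁻ x in Set.Ici 0, gaussianPDF 0 v x := by
        rw [lintegral_const_mul _ (measurable_gaussianPDF 0 v)]
    _ = ENNReal.ofReal (Real.exp (-a^2/(2*v))) * (1/2) := by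
        rw [← gaussianReal_apply _ hv, gaussian_half v hv]
    _ = ENNReal.ofReal (Real.exp (-a^2/(2*v)) / 2) := by
        rw [ENNReal.ofReal_div_of_pos (by norm_num), ENNReal.ofReal_ofNat,
          ENNReal.div_eq_inv_mul, ENNReal.div_eq_inv_mul]
        rw [mul_one, mul_comm]

lemma gaussian_tail_Iic (v : ℝ≥0) (hv : v ≠ 0) {a : ℝ} (ha : 0 ≤ a) :
    gaussianReal 0 v (Set.Iic (-a)) ≤ ENNReal.ofReal (Real.exp (-a^2/(2*v)) / 2) := by
  have h1 : gaussianReal 0 v (Set.Iic (-a)) = gaussianReal 0 v (Set.Ici a) := by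
    conv_lhs => rw [← gaussian_neg_symm v]
    rw [Measure.map_apply measurable_neg measurableSet_Iic]
    congr 1
    ext x
    simp [neg_le]
  rw [h1]
  exact gaussian_tail_Ici v hv ha


end AuxGaussian

/-- with probability at least `1 - 1/t^2`, all partial sums of `n` i.i.d.
`N(0, σ²)` random variables `ε_1, ..., ε_n` are bounded by `M_y √(l-k+1)` where
`M_y = 2σ√(log n + log t)`. -/
theorem gaussian_partial_sums_bound
    {Ω : Type*} [MeasurableSpace Ω] (P : Measure Ω) [IsProbabilityMeasure P]
    (n : ℕ) (hn : 1 ≤ n) (σ : ℝ≥0) (hσ : 0 < σ) (t : ℝ) (ht : 0 < t)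
    (ε : ℕ → Ω → ℝ) (hmeas : ∀ i, Measurable (ε i))
    (hindep : iIndepFun
      (fun i : (Finset.Icc 1 n : Finset ℕ) => ε i) P)
    (hlaw : ∀ i : ℕ, 1 ≤ i → i ≤ n → Measure.map (ε i) P = gaussianReal 0 (σ ^ 2))
    (My : ℝ) (hMy : My = 2 * σ * Real.sqrt (Real.log n + Real.log t)) :
    ENNReal.ofReal (1 - 1 / t ^ 2) ≤
      P {ω | ∀ k l : ℕ, 1 ≤ k → k ≤ l → l ≤ n →
        |∑ i ∈ Finset.Icc k l, ε i ω| ≤ My * Real.sqrt (l - k + 1)} := by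
  classical
  by_cases ht1 : t ≤ 1
  · have h1 : (1:ℝ) ≤ 1 / t ^ 2 := by
      rw [le_div_iff₀ (by positivity)]
      nlinarith
    rw [ENNReal.ofReal_eq_zero.mpr (by linarith)]
    exact zero_le
  push_neg at ht1
  have hn0 : (0:ℝ) < n := by exact_mod_cast hn
  have hL : 0 < Real.log n + Real.log t := by
    have h1 := Real.log_pos ht1
    have h2 : 0 ≤ Real.log n := Real.log_nonneg (by exact_mod_cast hn)
    linarith
  have hσ' : (0:ℝ) < σ := hσ
  have hMy0 : 0 ≤ My := by rw [hMy]; positivity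
  set G := {ω | ∀ k l : ℕ, 1 ≤ k → k ≤ l → l ≤ n →
      |∑ i ∈ Finset.Icc k l, ε i ω| ≤ My * Real.sqrt (l - k + 1)} with hG
  set B : ℕ → ℕ → Set Ω := fun k l => {ω | 1 ≤ k ∧ k ≤ l ∧ l ≤ n ∧
      My * Real.sqrt ((l:ℝ) - k + 1) < |∑ i ∈ Finset.Icc k l, ε i ω|} with hB
  have hsub : Gᶜ ⊆ ⋃ k ∈ Finset.Icc 1 n, ⋃ l ∈ Finset.Icc 1 n, B k l := by
    intro ω hω
    simp only [hG, Set.mem_compl_iff, Set.mem_setOf_eq, not_forall] at hω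
    obtain ⟨k, l, hk, hkl, hln, h⟩ := hω
    simp only [Set.mem_iUnion, Finset.mem_Icc]
    exact ⟨k, ⟨hk, le_trans hkl hln⟩, l, ⟨le_trans hk hkl, hln⟩, hk, hkl, hln, lt_of_not_ge h⟩
  have hu : (0:ℝ) < 1/((n:ℝ)^2*t^2) := by positivity
  have hpair : ∀ k l : ℕ, P (B k l) ≤ ENNReal.ofReal (1/((n:ℝ)^2*t^2)) := by
    intro k l
    by_cases hcond : 1 ≤ k ∧ k ≤ l ∧ l ≤ n
    · obtain ⟨hk, hkl, hln⟩ := hcond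
      set m : ℕ := l - k + 1 with hm
      set S : Ω → ℝ := fun ω => ∑ i ∈ Finset.Icc k l, ε i ω with hS
      have hSmeas : Measurable S := Finset.measurable_sum _ (fun i _ => hmeas i)
      set T : Finset (Finset.Icc 1 n : Finset ℕ) :=
        (Finset.Icc k l).subtype (· ∈ Finset.Icc 1 n) with hT
      have hmemIcc : ∀ x ∈ Finset.Icc k l, x ∈ Finset.Icc 1 n := by
        intro x hx
        rw [Finset.mem_Icc] at hx ⊢
        exact ⟨le_trans hk hx.1, le_trans hx.2 hln⟩
      have hsum_eq : ∀ ω, ∑ j ∈ T, ε (↑j) ω = S ω := fun ω =>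
        Finset.sum_subtype_of_mem (fun i => ε i ω) hmemIcc
      have hcard : T.card = m := by
        rw [hT, Finset.card_subtype, Finset.filter_true_of_mem hmemIcc, Nat.card_Icc]
        omega
      have hTne : T.Nonempty := by
        rw [← Finset.card_pos, hcard]
        omega
      have hσ2 : (σ^2 : ℝ≥0) ≠ 0 := pow_ne_zero 2 hσ.ne'
      have hmap : P.map S = gaussianReal 0 ((m : ℝ≥0) * σ^2) := by
        have h := sum_gaussian P (fun j : (Finset.Icc 1 n : Finset ℕ) => ε ↑j)
          (fun j => hmeas ↑j) (σ^2) hσ2 hindep T hTne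
          (fun j hj => hlaw ↑j (Finset.mem_Icc.mp j.2).1 (Finset.mem_Icc.mp j.2).2)
        rw [← hcard]
        rw [show S = fun ω => ∑ j ∈ T, ε (↑j) ω from funext fun ω => (hsum_eq ω).symm]
        exact h
      set V : ℝ≥0 := (m : ℝ≥0) * σ^2 with hV
      have hVne : V ≠ 0 := by
        refine mul_ne_zero ?_ hσ2
        simp [hm]
      have hVr : (V:ℝ) = (m:ℝ) * (σ:ℝ)^2 := by
        rw [hV]
        simp [NNReal.coe_mul, NNReal.coe_pow]
      have hm0 : (0:ℝ) < m := by
        have : 0 < m := by omega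
        exact_mod_cast this
      set a : ℝ := My * Real.sqrt ((l:ℝ) - k + 1) with haa
      have hmr : ((l:ℝ) - k + 1) = (m:ℝ) := by
        rw [hm]
        push_cast [Nat.cast_sub hkl]
        ring
      have ha : 0 ≤ a := by
        rw [haa]
        positivity
      have hBsub : B k l ⊆ S ⁻¹' (Set.Ici a) ∪ S ⁻¹' (Set.Iic (-a)) := by
        intro ω hω
        have h := hω.2.2.2
        rcases lt_abs.mp h with h' | h'
        · exact Or.inl (le_of_lt h')
        · exact Or.inr (by simp only [Set.mem_preimage, Set.mem_Iic]; linarith)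
      have hIci : P (S ⁻¹' (Set.Ici a)) = gaussianReal 0 V (Set.Ici a) := by
        rw [← hmap, Measure.map_apply hSmeas measurableSet_Ici]
      have hIic : P (S ⁻¹' (Set.Iic (-a))) = gaussianReal 0 V (Set.Iic (-a)) := by
        rw [← hmap, Measure.map_apply hSmeas measurableSet_Iic]
      have hexp : Real.exp (-a^2/(2*(V:ℝ))) = 1/((n:ℝ)^2*t^2) := by
        have hMy2 : My^2 = 4*(σ:ℝ)^2*(Real.log n + Real.log t) := by
          rw [hMy, mul_pow, mul_pow, Real.sq_sqrt hL.le]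
          ring
        have ha2 : a^2 = My^2 * m := by
          rw [haa, mul_pow, hmr, Real.sq_sqrt (le_of_lt hm0)]
        have harg : -a^2/(2*(V:ℝ)) = -(Real.log n + Real.log t) + -(Real.log n + Real.log t) := by
          rw [ha2, hMy2, hVr]
          field_simp
          ring
        rw [harg, Real.exp_add, Real.exp_neg, Real.exp_add, Real.exp_log hn0, Real.exp_log ht]
        field_simp
      calc P (B k l) ≤ P (S ⁻¹' (Set.Ici a) ∪ S ⁻¹' (Set.Iic (-a))) := measure_mono hBsub
        _ ≤ P (S ⁻¹' (Set.Ici a)) + P (S ⁻¹' (Set.Iic (-a))) := measure_union_le _ _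
        _ ≤ ENNReal.ofReal (Real.exp (-a^2/(2*(V:ℝ))) / 2)
            + ENNReal.ofReal (Real.exp (-a^2/(2*(V:ℝ))) / 2) := by
            rw [hIci, hIic]
            exact add_le_add (gaussian_tail_Ici V hVne ha) (gaussian_tail_Iic V hVne ha)
        _ = ENNReal.ofReal (1/((n:ℝ)^2*t^2)) := by
            rw [← ENNReal.ofReal_add (by positivity) (by positivity), hexp]
            ring_nf
    · have : B k l = ∅ := by
        ext ω
        simp only [hB, Set.mem_setOf_eq, Set.mem_empty_iff_false, iff_false]
        intro hc
        exact hcond ⟨hc.1, hc.2.1, hc.2.2.1⟩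
      rw [this]
      simp
  have hPGc : P Gᶜ ≤ ENNReal.ofReal (1/t^2) := by
    calc P Gᶜ ≤ P (⋃ k ∈ Finset.Icc 1 n, ⋃ l ∈ Finset.Icc 1 n, B k l) := measure_mono hsub
      _ ≤ ∑ k ∈ Finset.Icc 1 n, P (⋃ l ∈ Finset.Icc 1 n, B k l) :=
          measure_biUnion_finset_le _ _
      _ ≤ ∑ k ∈ Finset.Icc 1 n, ∑ l ∈ Finset.Icc 1 n, P (B k l) :=
          Finset.sum_le_sum fun k _ => measure_biUnion_finset_le _ _
      _ ≤ ∑ _k ∈ Finset.Icc 1 n, ∑ _l ∈ Finset.Icc 1 n,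
            ENNReal.ofReal (1/((n:ℝ)^2*t^2)) :=
          Finset.sum_le_sum fun k _ => Finset.sum_le_sum fun l _ => hpair k l
      _ = (n : ℝ≥0∞) * ((n : ℝ≥0∞) * ENNReal.ofReal (1/((n:ℝ)^2*t^2))) := by
          simp [Finset.sum_const, Nat.card_Icc, mul_assoc]
      _ = ENNReal.ofReal (1/t^2) := by
          rw [show ((n : ℝ≥0∞)) = ENNReal.ofReal (n:ℝ) by simp,
            ← ENNReal.ofReal_mul (by positivity), ← ENNReal.ofReal_mul (by positivity)]
          congr 1
          field_simp
  calc ENNReal.ofReal (1 - 1/t^2) = 1 - ENNReal.ofReal (1/t^2) := by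
        rw [ENNReal.ofReal_sub _ (by positivity), ENNReal.ofReal_one]
    _ ≤ 1 - P Gᶜ := tsub_le_tsub_left hPGc 1
    _ ≤ P G := by
        rw [tsub_le_iff_right]
        rw [← measure_univ (μ := P), ← Set.union_compl_self G]
        exact measure_union_le _ _
end

section
/- If a, b, M_y, λ > 0 and y_1,...,y_m satisfy |∑_{i=k}^{l} y_i| ≤ M_y·√(l−k+1) for all 1 ≤ k ≤ l ≤ m, and if for each index i in an interval of length m_k the element-wise bound |x̂_i − x_i| ≤ max(M_y/√(d_i), M_y²/(4λ), 2λ/m_k + 2M_y/√(m_k)) holds with d_i the distance of i to the nearest change point, then summing over the k-th interval yields the deterministic bound ∑_{i=n_k}^{n_{k+1}−1} |x̂_i − x_i|² ≤ m_k·(M_y²/(4λ))² + 8λ²/m_k + 8M_y² + 2M_y²(log m_k + 1). -/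
open Finset

/-- Harmonic sum bound: `∑_{j=1}^m 1/j ≤ log m + 1`. -/
lemma harm_sum_le_log (m : ℕ) : ∑ j ∈ Finset.Icc 1 m, (1:ℝ)/j ≤ Real.log m + 1 := by
  induction m with
  | zero => simp
  | succ m ih =>
    rw [Finset.sum_Icc_succ_top (by omega : 1 ≤ m + 1)]
    rcases Nat.eq_zero_or_pos m with hm | hm
    · subst hm; simp
    · have hm' : (0:ℝ) < m := by exact_mod_cast hm
      have hm1 : (0:ℝ) < (m:ℝ) + 1 := by linarith
      have hlog : Real.log ((m:ℝ)/((m:ℝ)+1)) ≤ (m:ℝ)/((m:ℝ)+1) - 1 :=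
        Real.log_le_sub_one_of_pos (by positivity)
      have hd : Real.log ((m:ℝ)/((m:ℝ)+1)) = Real.log m - Real.log ((m:ℝ)+1) :=
        Real.log_div (ne_of_gt hm') (ne_of_gt hm1)
      have h1 : (m:ℝ)/((m:ℝ)+1) - 1 = -(1/((m:ℝ)+1)) := by field_simp; ring
      push_cast
      linarith

/-- Harmonic-type bound in `range` form. -/
lemma harm_range_le_log (m : ℕ) :
    ∑ j ∈ Finset.range m, (1:ℝ)/((j:ℝ)+1) ≤ Real.log m + 1 := by
  have h := harm_sum_le_log m
  rw [← Finset.Ico_add_one_right_eq_Icc, Finset.sum_Ico_eq_sum_range] at h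
  try simp only [Nat.add_sub_cancel] at h
  calc ∑ j ∈ Finset.range m, (1:ℝ)/((j:ℝ)+1)
      = ∑ j ∈ Finset.range m, (1:ℝ)/((1 + j : ℕ) : ℝ) := by
        refine Finset.sum_congr rfl fun j _ => ?_
        push_cast; ring_nf
    _ ≤ Real.log m + 1 := h

set_option maxHeartbeats 1000000 in
/-- summing the element-wise fused lasso bound over the `k`-th constant interval
yields the deterministic squared-error bound for that interval. -/
theorem fused_lasso_interval_squared_error_bound
    (a b lam My : ℝ) (ha : 0 < a) (hb : 0 < b) (hlam : 0 < lam) (hMy : 0 < My)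
    (mk : ℕ) (hmk : 1 ≤ mk)
    (y : ℕ → ℝ)
    (hy : ∀ k l : ℕ, 1 ≤ k → k ≤ l → l ≤ mk →
      |∑ i ∈ Finset.Icc k l, y i| ≤ My * Real.sqrt (l - k + 1))
    (nk nk1 : ℕ) (hnk : 1 ≤ nk) (hnk1 : nk1 = nk + mk)
    (x xh : ℕ → ℝ)
    (hbound : ∀ i : ℕ, nk ≤ i → i ≤ nk1 - 1 →
      |xh i - x i| ≤ max (My / Real.sqrt (min (i + 1 - nk) (nk1 - i)))
        (max (My ^ 2 / (4 * lam)) (2 * lam / mk + 2 * My / Real.sqrt mk))) :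
    ∑ i ∈ Finset.Icc nk (nk1 - 1), |xh i - x i| ^ 2 ≤
      mk * (My ^ 2 / (4 * lam)) ^ 2 + 8 * lam ^ 2 / mk + 8 * My ^ 2
        + 2 * My ^ 2 * (Real.log mk + 1) := by
  have hmk0 : (0:ℝ) < mk := by exact_mod_cast hmk
  set B : ℝ := My ^ 2 / (4 * lam) with hB
  set C : ℝ := 2 * lam / mk + 2 * My / Real.sqrt mk with hC
  have hB0 : 0 ≤ B := by positivity
  have hr0 : 0 < Real.sqrt mk := Real.sqrt_pos.mpr hmk0
  have hC0 : 0 ≤ C := by positivity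
  -- per-term bound
  have hterm : ∀ i ∈ Finset.Icc nk (nk1 - 1),
      |xh i - x i| ^ 2 ≤
        My ^ 2 * (1 / min ((i:ℝ) + 1 - nk) ((nk1:ℝ) - i)) + B ^ 2 + C ^ 2 := by
    intro i hi
    simp only [Finset.mem_Icc] at hi
    have habs := hbound i hi.1 hi.2
    set d : ℝ := min ((i:ℝ) + 1 - nk) ((nk1:ℝ) - i) with hdd
    have hd0 : (0:ℝ) < d := by
      rw [hdd, lt_min_iff]
      constructor
      · have : (nk:ℝ) ≤ i := by exact_mod_cast hi.1
        linarith
      · have : (i:ℝ) < nk1 := by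
          have h' : i < nk1 := by omega
          exact_mod_cast h'
        linarith
    set A : ℝ := My / Real.sqrt d with hA
    have hA0 : 0 ≤ A := by positivity
    have hAsq : A ^ 2 = My ^ 2 * (1 / d) := by
      rw [hA, div_pow, Real.sq_sqrt hd0.le, mul_one_div]
    have hsq : |xh i - x i| ^ 2 ≤ (max A (max B C)) ^ 2 :=
      pow_le_pow_left₀ (abs_nonneg _) habs 2
    have hmax : (max A (max B C)) ^ 2 ≤ A ^ 2 + B ^ 2 + C ^ 2 := by
      rcases max_cases A (max B C) with ⟨h, _⟩ | ⟨h, _⟩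
      · rw [h]; nlinarith [sq_nonneg B, sq_nonneg C]
      · rw [h]
        rcases max_cases B C with ⟨h2, _⟩ | ⟨h2, _⟩ <;> rw [h2] <;>
          nlinarith [sq_nonneg A, sq_nonneg B, sq_nonneg C]
    calc |xh i - x i| ^ 2 ≤ (max A (max B C)) ^ 2 := hsq
      _ ≤ A ^ 2 + B ^ 2 + C ^ 2 := hmax
      _ = My ^ 2 * (1 / d) + B ^ 2 + C ^ 2 := by rw [hAsq]
  -- bound on the sum of reciprocals of distances
  have hS : ∑ i ∈ Finset.Icc nk (nk1 - 1), (1:ℝ) / min ((i:ℝ) + 1 - nk) ((nk1:ℝ) - i)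
      ≤ 2 * (Real.log mk + 1) := by
    have hIcc : Finset.Icc nk (nk1 - 1) = Finset.Ico nk nk1 := by
      rw [← Finset.Ico_add_one_right_eq_Icc]
      congr 1
      omega
    rw [hIcc, Finset.sum_Ico_eq_sum_range]
    have hcnt : nk1 - nk = mk := by omega
    rw [hcnt]
    have hstep : ∀ j ∈ Finset.range mk,
        (1:ℝ) / min (((nk + j : ℕ):ℝ) + 1 - nk) ((nk1:ℝ) - ((nk + j : ℕ):ℝ))
          ≤ 1 / ((j:ℝ) + 1) + 1 / ((mk - j : ℕ) : ℝ) := by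
      intro j hj
      simp only [Finset.mem_range] at hj
      have h1 : ((nk + j : ℕ):ℝ) + 1 - nk = (j:ℝ) + 1 := by push_cast; ring
      have h2 : (nk1:ℝ) - ((nk + j : ℕ):ℝ) = ((mk - j : ℕ) : ℝ) := by
        rw [Nat.cast_sub hj.le, hnk1]
        push_cast; ring
      rw [h1, h2]
      have hj1 : (0:ℝ) < (j:ℝ) + 1 := by positivity
      have hj2 : (0:ℝ) < ((mk - j : ℕ) : ℝ) := by
        have h' : 1 ≤ mk - j := by omega
        exact_mod_cast Nat.lt_of_lt_of_le Nat.zero_lt_one h'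
      rcases min_cases ((j:ℝ) + 1) ((mk - j : ℕ) : ℝ) with ⟨h, _⟩ | ⟨h, _⟩ <;> rw [h]
      · have : 0 ≤ 1 / ((mk - j : ℕ) : ℝ) := by positivity
        linarith
      · have : 0 ≤ 1 / ((j:ℝ) + 1) := by positivity
        linarith
    have hrefl : ∑ j ∈ Finset.range mk, (1:ℝ) / ((mk - j : ℕ) : ℝ)
        = ∑ j ∈ Finset.range mk, (1:ℝ) / ((j:ℝ) + 1) := by
      rw [← Finset.sum_range_reflect (fun j => (1:ℝ) / ((mk - j : ℕ) : ℝ)) mk]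
      refine Finset.sum_congr rfl fun j hj => ?_
      simp only [Finset.mem_range] at hj
      have h' : mk - (mk - 1 - j) = j + 1 := by omega
      rw [h']
      push_cast; ring
    calc ∑ j ∈ Finset.range mk,
          (1:ℝ) / min (((nk + j : ℕ):ℝ) + 1 - nk) ((nk1:ℝ) - ((nk + j : ℕ):ℝ))
        ≤ ∑ j ∈ Finset.range mk, (1 / ((j:ℝ) + 1) + 1 / ((mk - j : ℕ) : ℝ)) :=
          Finset.sum_le_sum hstep
      _ = ∑ j ∈ Finset.range mk, 1 / ((j:ℝ) + 1)
            + ∑ j ∈ Finset.range mk, (1:ℝ) / ((mk - j : ℕ) : ℝ) := Finset.sum_add_distrib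
      _ = ∑ j ∈ Finset.range mk, 1 / ((j:ℝ) + 1)
            + ∑ j ∈ Finset.range mk, 1 / ((j:ℝ) + 1) := by rw [hrefl]
      _ ≤ 2 * (Real.log mk + 1) := by
          have := harm_range_le_log mk
          linarith
  -- main summation
  have hcard : (Finset.Icc nk (nk1 - 1)).card = mk := by
    rw [Nat.card_Icc]; omega
  have hsum : ∑ i ∈ Finset.Icc nk (nk1 - 1), |xh i - x i| ^ 2 ≤
      My ^ 2 * (∑ i ∈ Finset.Icc nk (nk1 - 1), (1:ℝ) / min ((i:ℝ) + 1 - nk) ((nk1:ℝ) - i))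
        + (mk:ℝ) * B ^ 2 + (mk:ℝ) * C ^ 2 := by
    calc ∑ i ∈ Finset.Icc nk (nk1 - 1), |xh i - x i| ^ 2
        ≤ ∑ i ∈ Finset.Icc nk (nk1 - 1),
            (My ^ 2 * (1 / min ((i:ℝ) + 1 - nk) ((nk1:ℝ) - i)) + B ^ 2 + C ^ 2) :=
          Finset.sum_le_sum hterm
      _ = My ^ 2 * (∑ i ∈ Finset.Icc nk (nk1 - 1),
              (1:ℝ) / min ((i:ℝ) + 1 - nk) ((nk1:ℝ) - i))
            + (mk:ℝ) * B ^ 2 + (mk:ℝ) * C ^ 2 := by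
          rw [Finset.sum_add_distrib, Finset.sum_add_distrib, ← Finset.mul_sum,
            Finset.sum_const, Finset.sum_const, hcard, nsmul_eq_mul, nsmul_eq_mul]
  -- bound mk * C^2
  have hr2 : (Real.sqrt mk) ^ 2 = (mk:ℝ) := Real.sq_sqrt hmk0.le
  have hC2 : (mk:ℝ) * C ^ 2 ≤ 8 * lam ^ 2 / mk + 8 * My ^ 2 := by
    have gen : ∀ u v : ℝ, (u + v) ^ 2 ≤ 2 * u ^ 2 + 2 * v ^ 2 := by
      intro u v; nlinarith [sq_nonneg (u - v)]
    have hkey : C ^ 2 ≤ 2 * (2 * lam / mk) ^ 2 + 2 * (2 * My / Real.sqrt mk) ^ 2 := by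
      rw [hC]; exact gen _ _
    have h2 : (2 * My / Real.sqrt mk) ^ 2 = 4 * My ^ 2 / mk := by
      rw [div_pow, hr2]; ring
    have heq : (mk:ℝ) * (2 * (2 * lam / mk) ^ 2 + 2 * (4 * My ^ 2 / mk))
        = 8 * lam ^ 2 / mk + 8 * My ^ 2 := by
      field_simp
      ring
    calc (mk:ℝ) * C ^ 2 ≤ (mk:ℝ) * (2 * (2 * lam / mk) ^ 2 + 2 * (4 * My ^ 2 / mk)) := by
          rw [← h2]; exact mul_le_mul_of_nonneg_left hkey hmk0.le
      _ = 8 * lam ^ 2 / mk + 8 * My ^ 2 := heq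
  have hMyS : My ^ 2 * (∑ i ∈ Finset.Icc nk (nk1 - 1),
      (1:ℝ) / min ((i:ℝ) + 1 - nk) ((nk1:ℝ) - i)) ≤ My ^ 2 * (2 * (Real.log mk + 1)) :=
    mul_le_mul_of_nonneg_left hS (by positivity)
  calc ∑ i ∈ Finset.Icc nk (nk1 - 1), |xh i - x i| ^ 2
      ≤ My ^ 2 * (∑ i ∈ Finset.Icc nk (nk1 - 1),
          (1:ℝ) / min ((i:ℝ) + 1 - nk) ((nk1:ℝ) - i))
        + (mk:ℝ) * B ^ 2 + (mk:ℝ) * C ^ 2 := hsum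
    _ ≤ My ^ 2 * (2 * (Real.log mk + 1)) + (mk:ℝ) * B ^ 2
        + (8 * lam ^ 2 / mk + 8 * My ^ 2) := by linarith
    _ = mk * (My ^ 2 / (4 * lam)) ^ 2 + 8 * lam ^ 2 / mk + 8 * My ^ 2
        + 2 * My ^ 2 * (Real.log mk + 1) := by rw [hB]; ring
end

section
/- Let y_1,...,y_m ∈ ℝ, a, b ∈ ℝ, λ > 0, M_y > 0 with |∑_{i=k}^{l} y_i| ≤ M_y·√(l−k+1) for all 1 ≤ k ≤ l ≤ m, and let x̂ minimize G(x_1,...,x_m) = ∑_{i=1}^m (x_i − y_i)² + λ(|x_1 − a| + |x_m − b| + ∑_{i=1}^{m−1} |x_i − x_{i+1}|). Write x̂_0 = a and x̂_{m+1} = b. Then there are no indices 1 ≤ m_1 ≤ m_2 ≤ m with x̂_{m_1} = x̂_{m_1+1} = ... = x̂_{m_2} > M_y²/(4λ), x̂_{m_2} > x̂_{m_2+1}, and x̂_{m_1} > x̂_{m_1−1}; and symmetrically there are no 1 ≤ m_1 ≤ m_2 ≤ m with x̂_{m_1} = ... = x̂_{m_2} < −M_y²/(4λ), x̂_{m_2}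 < x̂_{m_2+1}, and x̂_{m_1} < x̂_{m_1−1}. -/
open Finset

private lemma icc_split_pen (m : ℕ) (hm : 1 ≤ m) (w : ℕ → ℝ) :
    ∑ i ∈ Icc 0 m, |w i - w (i + 1)| =
      |w 0 - w 1| + |w m - w (m + 1)| + ∑ i ∈ Icc 1 (m - 1), |w i - w (i + 1)| := by
  have h1 : Icc 0 m = insert 0 (Icc 1 m) := by
    ext j; simp only [Finset.mem_Icc, Finset.mem_insert]; omega
  have h2 : Icc 1 m = insert m (Icc 1 (m - 1)) := by
    ext j; simp only [Finset.mem_Icc, Finset.mem_insert]; omega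
  have h0 : (0 : ℕ) ∉ Icc 1 m := by simp
  have hmne : m ∉ Icc 1 (m - 1) := by simp only [Finset.mem_Icc]; omega
  rw [h1, Finset.sum_insert h0, h2, Finset.sum_insert hmne]
  simp only [zero_add]
  ring

private lemma no_local_max
    (m : ℕ) (hm : 1 ≤ m)
    (y : ℕ → ℝ) (a b : ℝ) (lam My : ℝ) (hlam : 0 < lam) (hMy : 0 < My)
    (hy : ∀ k l : ℕ, 1 ≤ k → k ≤ l → l ≤ m →
      |∑ i ∈ Finset.Icc k l, y i| ≤ My * Real.sqrt (l - k + 1))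
    (G : (ℕ → ℝ) → ℝ)
    (hG : ∀ z : ℕ → ℝ, G z =
      ∑ i ∈ Finset.Icc 1 m, (z i - y i) ^ 2
        + lam * (|z 1 - a| + |z m - b| + ∑ i ∈ Finset.Icc 1 (m - 1), |z i - z (i + 1)|))
    (xh : ℕ → ℝ) (hmin : ∀ z : ℕ → ℝ, G xh ≤ G z)
    (ha : xh 0 = a) (hb : xh (m + 1) = b) :
    ¬ ∃ m₁ m₂ : ℕ, 1 ≤ m₁ ∧ m₁ ≤ m₂ ∧ m₂ ≤ m ∧
        (∀ j : ℕ, m₁ ≤ j → j ≤ m₂ → xh j = xh m₁) ∧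
        My ^ 2 / (4 * lam) < xh m₁ ∧
        xh (m₂ + 1) < xh m₂ ∧ xh (m₁ - 1) < xh m₁ := by
  rintro ⟨m₁, m₂, h1, h12, h2m, hplat, hbig, hdrop2, hdrop1⟩
  have hm2 : xh m₂ = xh m₁ := hplat m₂ h12 le_rfl
  set ε : ℝ := min (xh m₁ - My ^ 2 / (4 * lam))
      (min (xh m₁ - xh (m₁ - 1)) (xh m₁ - xh (m₂ + 1))) with hεdef
  have hε0 : 0 < ε := by
    refine lt_min (by linarith) (lt_min (by linarith) (by linarith [hm2, hdrop2]))
  have hεd : ε ≤ xh m₁ - My ^ 2 / (4 * lam) := min_le_left _ _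
  have hε1 : ε ≤ xh m₁ - xh (m₁ - 1) := le_trans (min_le_right _ _) (min_le_left _ _)
  have hε2 : ε ≤ xh m₁ - xh (m₂ + 1) := le_trans (min_le_right _ _) (min_le_right _ _)
  obtain ⟨z, hzin, hzout⟩ : ∃ z : ℕ → ℝ,
      (∀ i, m₁ ≤ i ∧ i ≤ m₂ → z i = xh i - ε) ∧
      (∀ i, ¬(m₁ ≤ i ∧ i ≤ m₂) → z i = xh i) :=
    ⟨fun i => if m₁ ≤ i ∧ i ≤ m₂ then xh i - ε else xh i,
      fun i h => if_pos h, fun i h => if_neg h⟩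
  -- per-edge identity
  have hterm : ∀ i : ℕ, |z i - z (i + 1)| =
      |xh i - xh (i + 1)| - ((if i = m₁ - 1 then ε else 0) + (if i = m₂ then ε else 0)) := by
    intro i
    rcases eq_or_ne i (m₁ - 1) with hi1 | hi1
    · have him2 : i ≠ m₂ := by omega
      rw [if_pos hi1, if_neg him2]
      have e0 : z i = xh i := hzout i (by omega)
      have e1 : z (i + 1) = xh (i + 1) - ε := hzin (i + 1) ⟨by omega, by omega⟩
      have e2 : xh (i + 1) = xh m₁ := by
        have : i + 1 = m₁ := by omega
        rw [this]
      have e3 : xh i = xh (m₁ - 1) := by rw [hi1]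
      rw [e0, e1, e2, e3]
      rw [abs_of_nonpos (by linarith), abs_of_nonpos (by linarith)]
      ring
    rcases eq_or_ne i m₂ with hi2 | hi2
    · subst hi2
      rw [if_neg hi1, if_pos rfl]
      have e0 : z i = xh i - ε := hzin i ⟨h12, le_rfl⟩
      have e1 : z (i + 1) = xh (i + 1) := hzout (i + 1) (by omega)
      rw [e0, e1, hm2]
      have hlt : xh (i + 1) < xh m₁ := by rw [← hm2]; exact hdrop2
      rw [abs_of_nonneg (by linarith), abs_of_nonneg (by linarith)]
      ring
    · rw [if_neg hi1, if_neg hi2]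
      by_cases hin : m₁ ≤ i ∧ i ≤ m₂
      · have e0 : z i = xh i - ε := hzin i hin
        have e1 : z (i + 1) = xh (i + 1) - ε := hzin (i + 1) ⟨by omega, by omega⟩
        rw [e0, e1, show xh i - ε - (xh (i + 1) - ε) = xh i - xh (i + 1) by ring]
        ring
      · have e0 : z i = xh i := hzout i hin
        have e1 : z (i + 1) = xh (i + 1) := hzout (i + 1) (by omega)
        rw [e0, e1]
        ring
  have hmem1 : m₁ - 1 ∈ Icc 0 m := by simp only [Finset.mem_Icc]; omega
  have hmem2 : m₂ ∈ Icc 0 m := by simp only [Finset.mem_Icc]; omega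
  have hpen : ∑ i ∈ Icc 0 m, |z i - z (i + 1)|
      = (∑ i ∈ Icc 0 m, |xh i - xh (i + 1)|) - 2 * ε := by
    rw [Finset.sum_congr rfl (fun i _ => hterm i), Finset.sum_sub_distrib,
      Finset.sum_add_distrib, Finset.sum_ite_eq' (Icc 0 m) (m₁ - 1) (fun _ => ε),
      Finset.sum_ite_eq' (Icc 0 m) m₂ (fun _ => ε), if_pos hmem1, if_pos hmem2]
    ring
  -- fidelity
  have hfid : ∑ i ∈ Icc 1 m, (z i - y i) ^ 2
      = (∑ i ∈ Icc 1 m, (xh i - y i) ^ 2)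
        + (((m₂ + 1 - m₁ : ℕ) : ℝ) * (ε ^ 2 - 2 * ε * xh m₁)
            + 2 * ε * ∑ i ∈ Icc m₁ m₂, y i) := by
    have hsub : Icc m₁ m₂ ⊆ Icc 1 m := by
      intro j hj
      simp only [Finset.mem_Icc] at hj ⊢
      omega
    have h0 : ∑ i ∈ Icc m₁ m₂, ((z i - y i) ^ 2 - (xh i - y i) ^ 2)
        = ∑ i ∈ Icc 1 m, ((z i - y i) ^ 2 - (xh i - y i) ^ 2) :=
      Finset.sum_subset hsub (fun i _ hni => by
        rw [hzout i (by simpa [Finset.mem_Icc] using hni)]; ring)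
    have h1 : ∑ i ∈ Icc m₁ m₂, ((z i - y i) ^ 2 - (xh i - y i) ^ 2)
        = ∑ i ∈ Icc m₁ m₂, ((ε ^ 2 - 2 * ε * xh m₁) + 2 * ε * y i) := by
      refine Finset.sum_congr rfl fun i hi => ?_
      simp only [Finset.mem_Icc] at hi
      rw [hzin i hi, hplat i hi.1 hi.2]
      ring
    have h2 : ∑ i ∈ Icc m₁ m₂, ((ε ^ 2 - 2 * ε * xh m₁) + 2 * ε * y i)
        = ((m₂ + 1 - m₁ : ℕ) : ℝ) * (ε ^ 2 - 2 * ε * xh m₁)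
            + 2 * ε * ∑ i ∈ Icc m₁ m₂, y i := by
      rw [Finset.sum_add_distrib, Finset.sum_const, ← Finset.mul_sum,
        Nat.card_Icc, nsmul_eq_mul]
    have h3 : ∑ i ∈ Icc 1 m, ((z i - y i) ^ 2 - (xh i - y i) ^ 2)
        = ∑ i ∈ Icc 1 m, (z i - y i) ^ 2 - ∑ i ∈ Icc 1 m, (xh i - y i) ^ 2 :=
      Finset.sum_sub_distrib _ _
    have h4 := (h0.symm.trans (h1.trans h2))
    linarith [h3, h4]
  have hz0 : z 0 = xh 0 := hzout 0 (by omega)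
  have hzm1 : z (m + 1) = xh (m + 1) := hzout (m + 1) (by omega)
  have hGz : G z = G xh + (((m₂ + 1 - m₁ : ℕ) : ℝ) * (ε ^ 2 - 2 * ε * xh m₁)
      + 2 * ε * ∑ i ∈ Icc m₁ m₂, y i) - lam * (2 * ε) := by
    have hpz : |z 1 - a| + |z m - b| + ∑ i ∈ Icc 1 (m - 1), |z i - z (i + 1)|
        = ∑ i ∈ Icc 0 m, |z i - z (i + 1)| := by
      rw [icc_split_pen m hm z, hz0, ha, hzm1, hb, abs_sub_comm a (z 1)]
    have hpx : |xh 1 - a| + |xh m - b| + ∑ i ∈ Icc 1 (m - 1), |xh i - xh (i + 1)|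
        = ∑ i ∈ Icc 0 m, |xh i - xh (i + 1)| := by
      rw [icc_split_pen m hm xh, ha, hb, abs_sub_comm a (xh 1)]
    rw [hG z, hG xh, hpz, hpx, hfid, hpen]
    ring
  have hkey : 0 ≤ ((m₂ + 1 - m₁ : ℕ) : ℝ) * (ε ^ 2 - 2 * ε * xh m₁)
      + 2 * ε * ∑ i ∈ Icc m₁ m₂, y i - lam * (2 * ε) := by
    have := hmin z
    rw [hGz] at this
    linarith
  set nR : ℝ := ((m₂ + 1 - m₁ : ℕ) : ℝ) with hnR
  set S : ℝ := ∑ i ∈ Icc m₁ m₂, y i with hS0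
  have hn1 : (1 : ℝ) ≤ nR := by
    have h : 1 ≤ m₂ + 1 - m₁ := by omega
    rw [hnR]
    exact_mod_cast h
  have hkey2 : 0 ≤ nR * ε - 2 * nR * xh m₁ + 2 * S - 2 * lam := by
    have he : ε * (nR * ε - 2 * nR * xh m₁ + 2 * S - 2 * lam)
        = nR * (ε ^ 2 - 2 * ε * xh m₁) + 2 * ε * S - lam * (2 * ε) := by ring
    have hfac : ε * 0 ≤ ε * (nR * ε - 2 * nR * xh m₁ + 2 * S - 2 * lam) := by
      rw [mul_zero, he]
      exact hkey
    exact le_of_mul_le_mul_left hfac hε0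
  have hScast : nR = (m₂ : ℝ) - (m₁ : ℝ) + 1 := by
    rw [hnR, Nat.cast_sub (by omega : m₁ ≤ m₂ + 1)]
    push_cast
    ring
  have hSle : S ≤ My * Real.sqrt nR := by
    have h := hy m₁ m₂ h1 h12 h2m
    rw [← hScast] at h
    exact le_trans (le_abs_self _) h
  have hsqrt : Real.sqrt nR ^ 2 = nR := Real.sq_sqrt (by linarith)
  have hsnn : 0 ≤ Real.sqrt nR := Real.sqrt_nonneg _
  have hAM : 2 * My * Real.sqrt nR - 2 * lam ≤ 2 * nR * (My ^ 2 / (4 * lam)) := by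
    have h0 := sq_nonneg (2 * lam - Real.sqrt nR * My)
    have e : (2 * lam - Real.sqrt nR * My) ^ 2
        = 4 * lam ^ 2 - 4 * lam * (Real.sqrt nR * My) + nR * My ^ 2 := by
      linear_combination My ^ 2 * hsqrt
    have h2 : (2 * My * Real.sqrt nR - 2 * lam) * (4 * lam) ≤ nR * My ^ 2 * 2 := by
      nlinarith [h0, e]
    calc 2 * My * Real.sqrt nR - 2 * lam
        ≤ nR * My ^ 2 * 2 / (4 * lam) := by
          rw [le_div_iff₀ (by linarith : (0:ℝ) < 4 * lam)]
          linarith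
      _ = 2 * nR * (My ^ 2 / (4 * lam)) := by
          field_simp
  have t1 : nR * ε ≤ nR * (xh m₁ - My ^ 2 / (4 * lam)) :=
    mul_le_mul_of_nonneg_left hεd (by linarith)
  have t2 : 0 < nR * (xh m₁ - My ^ 2 / (4 * lam)) :=
    mul_pos (by linarith) (by linarith)
  linarith [hkey2, hSle, hAM, t1, t2]

/-- the fused lasso solution on one interval has no local maximum above
`My^2/(4*lam)` and no local minimum below `-My^2/(4*lam)` (Lemma 3.3 / `lemma:localmax`). -/
theorem fused_lasso_one_interval_no_local_extremum
    (m : ℕ) (hm : 1 ≤ m)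
    (y : ℕ → ℝ) (a b : ℝ) (lam My : ℝ) (hlam : 0 < lam) (hMy : 0 < My)
    (hy : ∀ k l : ℕ, 1 ≤ k → k ≤ l → l ≤ m →
      |∑ i ∈ Finset.Icc k l, y i| ≤ My * Real.sqrt (l - k + 1))
    (G : (ℕ → ℝ) → ℝ)
    (hG : ∀ z : ℕ → ℝ, G z =
      ∑ i ∈ Finset.Icc 1 m, (z i - y i) ^ 2
        + lam * (|z 1 - a| + |z m - b| + ∑ i ∈ Finset.Icc 1 (m - 1), |z i - z (i + 1)|))
    (xh : ℕ → ℝ) (hmin : ∀ z : ℕ → ℝ, G xh ≤ G z)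
    (ha : xh 0 = a) (hb : xh (m + 1) = b) :
    (¬ ∃ m₁ m₂ : ℕ, 1 ≤ m₁ ∧ m₁ ≤ m₂ ∧ m₂ ≤ m ∧
        (∀ j : ℕ, m₁ ≤ j → j ≤ m₂ → xh j = xh m₁) ∧
        My ^ 2 / (4 * lam) < xh m₁ ∧
        xh (m₂ + 1) < xh m₂ ∧ xh (m₁ - 1) < xh m₁) ∧
    (¬ ∃ m₁ m₂ : ℕ, 1 ≤ m₁ ∧ m₁ ≤ m₂ ∧ m₂ ≤ m ∧
        (∀ j : ℕ, m₁ ≤ j → j ≤ m₂ → xh j = xh m₁) ∧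
        xh m₁ < -(My ^ 2 / (4 * lam)) ∧
        xh m₂ < xh (m₂ + 1) ∧ xh m₁ < xh (m₁ - 1)) := by
  constructor
  · exact no_local_max m hm y a b lam My hlam hMy hy G hG xh hmin ha hb
  · have hy' : ∀ k l : ℕ, 1 ≤ k → k ≤ l → l ≤ m →
        |∑ i ∈ Finset.Icc k l, (fun i => -y i) i| ≤ My * Real.sqrt (l - k + 1) := by
      intro k l hk hkl hlm
      simp only [Finset.sum_neg_distrib, abs_neg]
      exact hy k l hk hkl hlm
    have hG' : ∀ z : ℕ → ℝ, (fun w : ℕ → ℝ => G (fun i => -w i)) z =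
        ∑ i ∈ Finset.Icc 1 m, (z i - (fun i => -y i) i) ^ 2
          + lam * (|z 1 - (-a)| + |z m - (-b)|
              + ∑ i ∈ Finset.Icc 1 (m - 1), |z i - z (i + 1)|) := by
      intro z
      show G (fun i => -z i) = _
      rw [hG (fun i => -z i)]
      congr 1
      · refine Finset.sum_congr rfl fun i _ => ?_
        show (-z i - y i) ^ 2 = (z i - (fun i => -y i) i) ^ 2
        show (-z i - y i) ^ 2 = (z i - -y i) ^ 2
        ring
      · congr 1
        have e1 : |(fun i => -z i) 1 - a| = |z 1 - (-a)| := by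
          show |(-z 1) - a| = _
          rw [show (-z 1) - a = -(z 1 - -a) by ring, abs_neg]
        have e2 : |(fun i => -z i) m - b| = |z m - (-b)| := by
          show |(-z m) - b| = _
          rw [show (-z m) - b = -(z m - -b) by ring, abs_neg]
        have e3 : ∑ i ∈ Finset.Icc 1 (m - 1), |(fun i => -z i) i - (fun i => -z i) (i + 1)|
            = ∑ i ∈ Finset.Icc 1 (m - 1), |z i - z (i + 1)| := by
          refine Finset.sum_congr rfl fun i _ => ?_
          show |(-z i) - (-z (i + 1))| = _
          rw [show (-z i) - (-z (i + 1)) = -(z i - z (i + 1)) by ring, abs_neg]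
        rw [e1, e2, e3]
    have hmin' : ∀ z : ℕ → ℝ, (fun w : ℕ → ℝ => G (fun i => -w i)) (fun i => -xh i)
        ≤ (fun w : ℕ → ℝ => G (fun i => -w i)) z := by
      intro z
      show G (fun i => -(-xh i)) ≤ G (fun i => -z i)
      simp only [neg_neg]
      exact hmin _
    have ha' : (fun i => -xh i) 0 = -a := by show -xh 0 = -a; rw [ha]
    have hb' : (fun i => -xh i) (m + 1) = -b := by show -xh (m + 1) = -b; rw [hb]
    have H := no_local_max m hm (fun i => -y i) (-a) (-b) lam My hlam hMy hy'
      (fun w : ℕ → ℝ => G (fun i => -w i)) hG' (fun i => -xh i) hmin' ha' hb'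
    rintro ⟨m₁, m₂, h1, h12, h2m, hplat, hsmall, hup2, hup1⟩
    refine H ⟨m₁, m₂, h1, h12, h2m, fun j hj hj' => ?_, ?_, ?_, ?_⟩
    · show -xh j = -xh m₁
      rw [hplat j hj hj']
    · show My ^ 2 / (4 * lam) < -xh m₁
      linarith
    · show -xh (m₂ + 1) < -xh m₂
      linarith
    · show -xh (m₁ - 1) < -xh m₁
      linarith
end

section
/- Let y_1,...,y_m ∈ ℝ, λ > 0, M_y > 0 with |∑_{i=k}^{l} y_i| ≤ M_y·√(l−k+1) for all 1 ≤ k ≤ l ≤ m, let a, b ∈ ℝ be nonzero with opposite signs (sign(a) ≠ sign(b)), and let x̂ minimize G(x_1,...,x_m) = ∑_{i=1}^m (x_i − y_i)² + λ(|x_1 − a| + |x_m − b| + ∑_{i=1}^{m−1} |x_i − x_{i+1}|). Then for every 1 ≤ i ≤ m, |x̂_i| ≤ max( M_y/√i, M_y/√(m+1−i), M_y²/(4λ) ). -/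
open Finset

private lemma eps_nonpos {A n e0 : ℝ} (he0 : 0 < e0)
    (h : ∀ e : ℝ, 0 < e → e ≤ e0 → A ≤ n * e) : A ≤ 0 := by
  by_contra hA
  push_neg at hA
  rcases le_or_gt n 0 with hn | hn
  · have h1 := h e0 he0 le_rfl
    nlinarith
  · have hpos : 0 < min e0 (A / (2 * n)) := lt_min he0 (by positivity)
    have h1 := h _ hpos (min_le_left _ _)
    have h2 : n * min e0 (A / (2 * n)) ≤ n * (A / (2 * n)) :=
      mul_le_mul_of_nonneg_left (min_le_right _ _) hn.le
    have h3 : n * (A / (2 * n)) = A / 2 := by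
      field_simp
    nlinarith

set_option maxHeartbeats 2000000 in
private lemma fused_key
    (m : ℕ) (hm : 1 ≤ m)
    (y : ℕ → ℝ) (a b : ℝ) (lam My : ℝ) (hlam : 0 < lam) (hMy : 0 < My)
    (ha : a ≠ 0) (hb : b ≠ 0) (hsign : Real.sign a ≠ Real.sign b)
    (hy : ∀ k l : ℕ, 1 ≤ k → k ≤ l → l ≤ m →
      |∑ i ∈ Finset.Icc k l, y i| ≤ My * Real.sqrt (l - k + 1))
    (G : (ℕ → ℝ) → ℝ)
    (hG : ∀ z : ℕ → ℝ, G z =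
      ∑ i ∈ Finset.Icc 1 m, (z i - y i) ^ 2
        + lam * (|z 1 - a| + |z m - b| + ∑ i ∈ Finset.Icc 1 (m - 1), |z i - z (i + 1)|))
    (xh : ℕ → ℝ) (hmin : ∀ z : ℕ → ℝ, G xh ≤ G z) :
    ∀ i : ℕ, 1 ≤ i → i ≤ m →
      xh i ≤ max (max (My / Real.sqrt i) (My / Real.sqrt (m + 1 - i)))
        (My ^ 2 / (4 * lam)) := by
  classical
  intro i hi1 him
  set c := xh i with hc_def
  have hipos : (0:ℝ) < (i:ℝ) := by exact_mod_cast hi1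
  have hsqrti : 0 < Real.sqrt i := Real.sqrt_pos.mpr hipos
  rcases le_or_gt c 0 with hc0 | hc0
  · exact le_max_of_le_left (le_max_of_le_left (hc0.trans (div_pos hMy hsqrti).le))
  -- the maximal block [k, l] ∋ i on which xh ≥ c
  set P : ℕ → Prop := fun j => i ≤ j ∧ ∀ j', i ≤ j' → j' ≤ j → c ≤ xh j' with hP_def
  have hPi : P i := ⟨le_rfl, fun j' h1 h2 => by
    have hji : j' = i := le_antisymm h2 h1
    rw [hji]⟩
  set l := Nat.findGreatest P m with hl_def
  have hPl : P l := Nat.findGreatest_spec him hPi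
  have hil : i ≤ l := hPl.1
  have hlm : l ≤ m := Nat.findGreatest_le m
  have hlgap : l < m → xh (l + 1) < c := by
    intro hlt
    by_contra hcon
    push_neg at hcon
    have hng : ¬ P (l + 1) := Nat.findGreatest_is_greatest (n := m) (by omega) (by omega)
    apply hng
    refine ⟨by omega, fun j' h1 h2 => ?_⟩
    rcases Nat.lt_or_ge j' (l + 1) with h | h
    · exact hPl.2 j' h1 (by omega)
    · have hj : j' = l + 1 := by omega
      rw [hj]; exact hcon
  set Q : ℕ → Prop := fun d => ∀ j', i - d ≤ j' → j' ≤ i → c ≤ xh j' with hQ_def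
  have hQ0 : Q 0 := fun j' h1 h2 => by
    have hji : j' = i := by omega
    rw [hji]
  set d0 := Nat.findGreatest Q (i - 1) with hd0_def
  have hQd : Q d0 := Nat.findGreatest_spec (Nat.zero_le _) hQ0
  have hd0 : d0 ≤ i - 1 := Nat.findGreatest_le _
  set k := i - d0 with hk_def
  have hk1 : 1 ≤ k := by omega
  have hki : k ≤ i := by omega
  have hkgap : 1 < k → xh (k - 1) < c := by
    intro hlt
    by_contra hcon
    push_neg at hcon
    have hng : ¬ Q (d0 + 1) := Nat.findGreatest_is_greatest (n := i - 1) (by omega) (by omega)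
    apply hng
    intro j' h1 h2
    rcases Nat.lt_or_ge j' k with h | h
    · have hj : j' = k - 1 := by omega
      rw [hj]; exact hcon
    · exact hQd j' (by omega) h2
  have hge : ∀ j, k ≤ j → j ≤ l → c ≤ xh j := by
    intro j h1 h2
    rcases le_or_gt j i with h | h
    · exact hQd j (by omega) h
    · exact hPl.2 j (by omega) h2
  have hkl : k ≤ l := hki.trans hil
  clear hPl hQd hPi hQ0 hd0 hl_def hd0_def hk_def hP_def hQ_def
  clear_value l d0 k
  clear d0 P Q
  -- extended sequence with boundary values
  set E : (ℕ → ℝ) → ℕ → ℝ := fun w j => if j = 0 then a else if j = m + 1 then b else w j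
    with hE_def
  have hEapp : ∀ (w : ℕ → ℝ) (j : ℕ),
      E w j = if j = 0 then a else if j = m + 1 then b else w j := fun w j => rfl
  have hGform : ∀ w : ℕ → ℝ, G w =
      ∑ j ∈ Finset.Icc 1 m, (w j - y j) ^ 2
        + lam * ∑ j ∈ Finset.Icc 0 m, |E w j - E w (j + 1)| := by
    intro w
    rw [hG w]
    have hIcc0 : Finset.Icc 0 m = insert 0 (Finset.Icc 1 m) := by
      ext j; simp [Finset.mem_Icc, Finset.mem_insert]; omega
    have hm1 : m - 1 + 1 = m := by omega
    have htop : ∑ j ∈ Finset.Icc 1 m, |E w j - E w (j + 1)|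
        = ∑ j ∈ Finset.Icc 1 (m - 1), |E w j - E w (j + 1)| + |E w m - E w (m + 1)| := by
      have := Finset.sum_Icc_succ_top (a := 1) (b := m - 1) (by omega)
        (fun j => |E w j - E w (j + 1)|)
      rw [hm1] at this
      exact this
    have h0 : |E w 0 - E w 1| = |w 1 - a| := by
      rw [hEapp, hEapp, if_pos rfl, if_neg (by omega : (1:ℕ) ≠ 0),
        if_neg (by omega : (1:ℕ) ≠ m + 1), abs_sub_comm]
    have hmm : |E w m - E w (m + 1)| = |w m - b| := by
      rw [hEapp, hEapp, if_neg (by omega : m ≠ 0), if_neg (by omega : m ≠ m + 1),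
        if_neg (by omega : m + 1 ≠ 0), if_pos rfl]
    have hmid : ∀ j ∈ Finset.Icc 1 (m - 1), |E w j - E w (j + 1)| = |w j - w (j + 1)| := by
      intro j hj
      simp only [Finset.mem_Icc] at hj
      rw [hEapp, hEapp, if_neg (by omega : j ≠ 0), if_neg (by omega : j ≠ m + 1),
        if_neg (by omega : j + 1 ≠ 0), if_neg (by omega : j + 1 ≠ m + 1)]
    rw [hIcc0, Finset.sum_insert (by simp), htop, h0, hmm, Finset.sum_congr rfl hmid]
    ring
  set vL := E xh (k - 1) with hvL_def
  set vR := E xh (l + 1) with hvR_def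
  set S := ∑ j ∈ Finset.Icc k l, (xh j - y j) with hS_def
  set n : ℝ := (l : ℝ) - (k : ℝ) + 1 with hn_def
  have hcard : ((Finset.Icc k l).card : ℝ) = n := by
    rw [Nat.card_Icc, hn_def]
    have h1 : k ≤ l + 1 := by omega
    push_cast [h1]
    ring
  have hExk : E xh k = xh k := by
    rw [hEapp, if_neg (by omega : k ≠ 0), if_neg (by omega : k ≠ m + 1)]
  have hExl : E xh l = xh l := by
    rw [hEapp, if_neg (by omega : l ≠ 0), if_neg (by omega : l ≠ m + 1)]
  -- the key variational inequality
  have hmain : ∀ ε : ℝ, 0 ≤ ε →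
      0 ≤ (n * ε ^ 2 - 2 * ε * S)
        + lam * ((|vL - (xh k - ε)| - |vL - xh k|) + (|xh l - ε - vR| - |xh l - vR|)) := by
    intro ε hε
    set z : ℕ → ℝ := fun j => if k ≤ j ∧ j ≤ l then xh j - ε else xh j with hz_def
    have hzapp : ∀ j : ℕ, z j = if k ≤ j ∧ j ≤ l then xh j - ε else xh j := fun j => rfl
    have h1 := hmin z
    rw [hGform z, hGform xh] at h1
    have hq : ∑ j ∈ Finset.Icc 1 m, (z j - y j) ^ 2
        - ∑ j ∈ Finset.Icc 1 m, (xh j - y j) ^ 2 = n * ε ^ 2 - 2 * ε * S := by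
      rw [← Finset.sum_sub_distrib]
      have hsub : Finset.Icc k l ⊆ Finset.Icc 1 m := by
        intro j hj; simp only [Finset.mem_Icc] at *; omega
      have hzero : ∀ j ∈ Finset.Icc 1 m, j ∉ Finset.Icc k l →
          ((z j - y j) ^ 2 - (xh j - y j) ^ 2) = 0 := by
        intro j _ hj
        simp only [Finset.mem_Icc] at hj
        have hzj : z j = xh j := by
          rw [hzapp, if_neg (by omega)]
        rw [hzj]; ring
      rw [← Finset.sum_subset hsub hzero]
      have hval : ∀ j ∈ Finset.Icc k l,
          ((z j - y j) ^ 2 - (xh j - y j) ^ 2) = ε ^ 2 - 2 * ε * (xh j - y j) := by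
        intro j hj
        simp only [Finset.mem_Icc] at hj
        have hzj : z j = xh j - ε := by
          rw [hzapp, if_pos hj]
        rw [hzj]; ring
      rw [Finset.sum_congr rfl hval, Finset.sum_sub_distrib, Finset.sum_const, nsmul_eq_mul,
        hcard, ← Finset.mul_sum, ← hS_def]
    have hEz : ∀ j, j ≤ m + 1 → E z j = E xh j - (if k ≤ j ∧ j ≤ l then ε else 0) := by
      intro j hj
      rw [hEapp, hEapp, hzapp]
      split_ifs <;> first | omega | ring1
    have hp : ∑ j ∈ Finset.Icc 0 m, |E z j - E z (j + 1)|
        - ∑ j ∈ Finset.Icc 0 m, |E xh j - E xh (j + 1)|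
        = (|vL - (xh k - ε)| - |vL - xh k|) + (|xh l - ε - vR| - |xh l - vR|) := by
      rw [← Finset.sum_sub_distrib]
      have hsub2 : ({k - 1, l} : Finset ℕ) ⊆ Finset.Icc 0 m := by
        intro j hj
        simp only [Finset.mem_insert, Finset.mem_singleton] at hj
        simp only [Finset.mem_Icc]
        omega
      have hzero : ∀ j ∈ Finset.Icc 0 m, j ∉ ({k - 1, l} : Finset ℕ) →
          (|E z j - E z (j + 1)| - |E xh j - E xh (j + 1)|) = 0 := by
        intro j hj hj2
        simp only [Finset.mem_Icc] at hj
        simp only [Finset.mem_insert, Finset.mem_singleton, not_or] at hj2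
        rw [hEz j (by omega), hEz (j + 1) (by omega)]
        have hiff : (k ≤ j ∧ j ≤ l) ↔ (k ≤ j + 1 ∧ j + 1 ≤ l) := by omega
        rw [if_congr hiff rfl rfl]
        have harr : E xh j - (if k ≤ j + 1 ∧ j + 1 ≤ l then ε else 0)
            - (E xh (j + 1) - (if k ≤ j + 1 ∧ j + 1 ≤ l then ε else 0))
            = E xh j - E xh (j + 1) := by ring
        rw [harr, sub_self]
      rw [← Finset.sum_subset hsub2 hzero]
      have hne : (k - 1 : ℕ) ∉ ({l} : Finset ℕ) := by simp; omega
      rw [Finset.sum_insert hne, Finset.sum_singleton]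
      have hd1 : |E z (k - 1) - E z (k - 1 + 1)| - |E xh (k - 1) - E xh (k - 1 + 1)|
          = |vL - (xh k - ε)| - |vL - xh k| := by
        have e1 : k - 1 + 1 = k := by omega
        rw [e1, hEz (k - 1) (by omega), hEz k (by omega), if_neg (by omega),
          if_pos ⟨le_rfl, hkl⟩, hExk, sub_zero, hvL_def]
      have hd2 : |E z l - E z (l + 1)| - |E xh l - E xh (l + 1)|
          = |xh l - ε - vR| - |xh l - vR| := by
        rw [hEz l (by omega), hEz (l + 1) (by omega), if_pos ⟨hkl, le_rfl⟩,
          if_neg (by omega), hExl, sub_zero, hvR_def]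
      rw [hd1, hd2]
    nlinarith [h1, hq, hp]
  -- Lipschitz bounds on the two edge terms
  have hdL_lip : ∀ ε : ℝ, 0 ≤ ε → |vL - (xh k - ε)| - |vL - xh k| ≤ ε := by
    intro ε hε
    have e1 : vL - (xh k - ε) = (vL - xh k) + ε := by ring
    have h2 := abs_add_le (vL - xh k) ε
    rw [abs_of_nonneg hε] at h2
    rw [e1]; linarith
  have hdR_lip : ∀ ε : ℝ, 0 ≤ ε → |xh l - ε - vR| - |xh l - vR| ≤ ε := by
    intro ε hε
    have e1 : xh l - ε - vR = (xh l - vR) + (-ε) := by ring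
    have h2 := abs_add_le (xh l - vR) (-ε)
    rw [abs_neg, abs_of_nonneg hε] at h2
    rw [e1]; linarith
  -- exact values when the neighbor is strictly below c
  have hxk : c ≤ xh k := hge k le_rfl hkl
  have hxl : c ≤ xh l := hge l hkl le_rfl
  have hdL_exact : vL < c → ∀ ε : ℝ, 0 < ε → ε ≤ c - vL →
      |vL - (xh k - ε)| - |vL - xh k| = -ε := by
    intro hv ε hε hε2
    have h1 : vL - (xh k - ε) ≤ 0 := by linarith
    have h2 : vL - xh k ≤ 0 := by linarith
    rw [abs_of_nonpos h1, abs_of_nonpos h2]; ring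
  have hdR_exact : vR < c → ∀ ε : ℝ, 0 < ε → ε ≤ c - vR →
      |xh l - ε - vR| - |xh l - vR| = -ε := by
    intro hv ε hε hε2
    have h1 : 0 ≤ xh l - ε - vR := by linarith
    have h2 : 0 ≤ xh l - vR := by linarith
    rw [abs_of_nonneg h1, abs_of_nonneg h2]; ring
  -- structure of the neighbors
  have hvL_cases : vL < c ∨ (0 < a ∧ k = 1) := by
    rcases eq_or_lt_of_le hk1 with h1 | h1
    · have hva : vL = a := by
        rw [hvL_def, hEapp, if_pos (by omega)]
      rcases lt_or_gt_of_ne ha with hneg | hpos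
      · left; rw [hva]; linarith
      · right; exact ⟨hpos, h1.symm⟩
    · left
      have hvx : vL = xh (k - 1) := by
        rw [hvL_def, hEapp, if_neg (by omega), if_neg (by omega)]
      rw [hvx]; exact hkgap h1
  have hvR_cases : vR < c ∨ (0 < b ∧ l = m) := by
    rcases eq_or_lt_of_le hlm with h1 | h1
    · have hvb : vR = b := by
        rw [hvR_def, h1, hEapp, if_neg (by omega), if_pos rfl]
      rcases lt_or_gt_of_ne hb with hneg | hpos
      · left; rw [hvb]; linarith
      · right; exact ⟨hpos, h1⟩
    · left
      have hvx : vR = xh (l + 1) := by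
        rw [hvR_def, hEapp, if_neg (by omega), if_neg (by omega)]
      rw [hvx]; exact hlgap h1
  have hnotboth : ¬ (0 < a ∧ 0 < b) := by
    rintro ⟨ha', hb'⟩
    exact hsign (by rw [Real.sign_of_pos ha', Real.sign_of_pos hb'])
  -- common numeric facts
  have hkr : (k:ℝ) ≤ (l:ℝ) := by exact_mod_cast hkl
  have hn1 : 1 ≤ n := by rw [hn_def]; linarith
  have hsq : Real.sqrt n ^ 2 = n := Real.sq_sqrt (by linarith)
  have hs1 : 1 ≤ Real.sqrt n := by
    rw [show (1:ℝ) = Real.sqrt 1 by simp]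
    exact Real.sqrt_le_sqrt hn1
  have hs0 : 0 < Real.sqrt n := by linarith
  have hy' : |∑ j ∈ Finset.Icc k l, y j| ≤ My * Real.sqrt n := by
    have := hy k l hk1 hkl hlm
    rw [← hn_def] at this
    exact this
  have hsum_x : c * n ≤ ∑ j ∈ Finset.Icc k l, xh j := by
    have h1 : ∑ _j ∈ Finset.Icc k l, c ≤ ∑ j ∈ Finset.Icc k l, xh j :=
      Finset.sum_le_sum (fun j hj => by
        simp only [Finset.mem_Icc] at hj
        exact hge j hj.1 hj.2)
    rwa [Finset.sum_const, nsmul_eq_mul, hcard, mul_comm] at h1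
  have hS_eq : ∑ j ∈ Finset.Icc k l, xh j = S + ∑ j ∈ Finset.Icc k l, y j := by
    rw [hS_def, Finset.sum_sub_distrib]; ring
  have hyle : ∑ j ∈ Finset.Icc k l, y j ≤ My * Real.sqrt n :=
    (le_abs_self _).trans hy'
  rcases hvL_cases with hvL | ⟨hapos, hk1'⟩
  · rcases hvR_cases with hvR | ⟨hbpos, hlm'⟩
    · -- both neighbors strictly below c : get S ≤ -lam, so c ≤ My²/(4 lam)
      have key : 2 * S + 2 * lam ≤ 0 := by
        refine eps_nonpos (n := n)
          (lt_min (by linarith : (0:ℝ) < c - vL) (by linarith : (0:ℝ) < c - vR)) ?_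
        intro ε hε hε2
        have h1 := hmain ε hε.le
        rw [hdL_exact hvL ε hε (hε2.trans (min_le_left _ _)),
          hdR_exact hvR ε hε (hε2.trans (min_le_right _ _))] at h1
        by_contra hcon
        push_neg at hcon
        nlinarith [mul_pos hε (show (0:ℝ) < 2 * S + 2 * lam - n * ε by linarith)]
      have hS : S ≤ -lam := by linarith
      have hfin : c * n ≤ My * Real.sqrt n - lam := by
        calc c * n ≤ ∑ j ∈ Finset.Icc k l, xh j := hsum_x
        _ = S + ∑ j ∈ Finset.Icc k l, y j := hS_eq
        _ ≤ My * Real.sqrt n - lam := by linarith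
      have hgoal : c ≤ My ^ 2 / (4 * lam) := by
        rw [le_div_iff₀ (by positivity)]
        have h4 : 4 * lam * (c * (Real.sqrt n) ^ 2) ≤ 4 * lam * (My * Real.sqrt n - lam) := by
          rw [hsq]
          nlinarith [hfin, hlam]
        nlinarith [h4, sq_nonneg (My * Real.sqrt n - 2 * lam), hs0,
          mul_pos hc0 (mul_pos (by linarith : (0:ℝ) < 4 * lam) hs0)]
      exact le_max_of_le_right hgoal
    · -- right neighbor is boundary b > 0, so left neighbor strictly below: c ≤ My/√(m+1-i)
      have key : 2 * S ≤ 0 := by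
        refine eps_nonpos (n := n) (show (0:ℝ) < c - vL by linarith) ?_
        intro ε hε hε2
        have h1 := hmain ε hε.le
        rw [hdL_exact hvL ε hε hε2] at h1
        have h2 := hdR_lip ε hε.le
        have h3 : lam * (-ε + (|xh l - ε - vR| - |xh l - vR|)) ≤ 0 := by
          nlinarith [mul_le_mul_of_nonneg_left h2 hlam.le]
        by_contra hcon
        push_neg at hcon
        nlinarith [mul_pos hε (show (0:ℝ) < 2 * S - n * ε by linarith)]
      have hfin : c * n ≤ My * Real.sqrt n := by
        calc c * n ≤ ∑ j ∈ Finset.Icc k l, xh j := hsum_x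
        _ = S + ∑ j ∈ Finset.Icc k l, y j := hS_eq
        _ ≤ My * Real.sqrt n := by linarith
      have hfin2 : c * Real.sqrt n ≤ My := by
        nlinarith [hfin, hsq, hs0]
      have hq1 : (0:ℝ) < (m:ℝ) + 1 - (i:ℝ) := by
        have : (i:ℝ) ≤ (m:ℝ) := by exact_mod_cast him
        linarith
      have hqn : (m:ℝ) + 1 - (i:ℝ) ≤ n := by
        have h5 : (l:ℝ) = (m:ℝ) := by exact_mod_cast congrArg (Nat.cast : ℕ → ℝ) hlm'
        have h6 : (k:ℝ) ≤ (i:ℝ) := by exact_mod_cast hki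
        rw [hn_def]; linarith
      have hgoal : c ≤ My / Real.sqrt ((m:ℝ) + 1 - (i:ℝ)) := by
        rw [le_div_iff₀ (Real.sqrt_pos.mpr hq1)]
        calc c * Real.sqrt ((m:ℝ) + 1 - (i:ℝ)) ≤ c * Real.sqrt n :=
          mul_le_mul_of_nonneg_left (Real.sqrt_le_sqrt hqn) hc0.le
        _ ≤ My := hfin2
      exact le_max_of_le_left (le_max_of_le_right hgoal)
  · -- left neighbor is boundary a > 0; right neighbor must be strictly below: c ≤ My/√i
    have hvR : vR < c := by
      rcases hvR_cases with h | ⟨hbpos, _⟩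
      · exact h
      · exact absurd ⟨hapos, hbpos⟩ hnotboth
    have key : 2 * S ≤ 0 := by
      refine eps_nonpos (n := n) (show (0:ℝ) < c - vR by linarith) ?_
      intro ε hε hε2
      have h1 := hmain ε hε.le
      rw [hdR_exact hvR ε hε hε2] at h1
      have h2 := hdL_lip ε hε.le
      have h3 : lam * ((|vL - (xh k - ε)| - |vL - xh k|) + -ε) ≤ 0 := by
        nlinarith [mul_le_mul_of_nonneg_left h2 hlam.le]
      by_contra hcon
      push_neg at hcon
      nlinarith [mul_pos hε (show (0:ℝ) < 2 * S - n * ε by linarith)]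
    have hfin : c * n ≤ My * Real.sqrt n := by
      calc c * n ≤ ∑ j ∈ Finset.Icc k l, xh j := hsum_x
      _ = S + ∑ j ∈ Finset.Icc k l, y j := hS_eq
      _ ≤ My * Real.sqrt n := by linarith
    have hfin2 : c * Real.sqrt n ≤ My := by
      nlinarith [hfin, hsq, hs0]
    have hqn : (i:ℝ) ≤ n := by
      have h5 : (k:ℝ) = 1 := by exact_mod_cast congrArg (Nat.cast : ℕ → ℝ) hk1'
      have h6 : (i:ℝ) ≤ (l:ℝ) := by exact_mod_cast hil
      rw [hn_def]; linarith
    have hgoal : c ≤ My / Real.sqrt (i:ℝ) := by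
      rw [le_div_iff₀ hsqrti]
      calc c * Real.sqrt (i:ℝ) ≤ c * Real.sqrt n :=
        mul_le_mul_of_nonneg_left (Real.sqrt_le_sqrt hqn) hc0.le
      _ ≤ My := hfin2
    exact le_max_of_le_left (le_max_of_le_left hgoal)

/-- element-wise bound for the one-interval fused lasso minimizer when the
boundary values `a` and `b` are nonzero and have opposite signs. -/
theorem fused_lasso_one_interval_elementwise_bound_opposite_signs
    (m : ℕ) (hm : 1 ≤ m)
    (y : ℕ → ℝ) (a b : ℝ) (lam My : ℝ) (hlam : 0 < lam) (hMy : 0 < My)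
    (ha : a ≠ 0) (hb : b ≠ 0) (hsign : Real.sign a ≠ Real.sign b)
    (hy : ∀ k l : ℕ, 1 ≤ k → k ≤ l → l ≤ m →
      |∑ i ∈ Finset.Icc k l, y i| ≤ My * Real.sqrt (l - k + 1))
    (G : (ℕ → ℝ) → ℝ)
    (hG : ∀ z : ℕ → ℝ, G z =
      ∑ i ∈ Finset.Icc 1 m, (z i - y i) ^ 2
        + lam * (|z 1 - a| + |z m - b| + ∑ i ∈ Finset.Icc 1 (m - 1), |z i - z (i + 1)|))
    (xh : ℕ → ℝ) (hmin : ∀ z : ℕ → ℝ, G xh ≤ G z) :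
    ∀ i : ℕ, 1 ≤ i → i ≤ m →
      |xh i| ≤ max (max (My / Real.sqrt i) (My / Real.sqrt (m + 1 - i)))
        (My ^ 2 / (4 * lam)) := by
  intro i hi1 him
  have hupper := fused_key m hm y a b lam My hlam hMy ha hb hsign hy G hG xh hmin i hi1 him
  -- lower bound via the negated problem
  set G' : (ℕ → ℝ) → ℝ := fun z => G (fun j => - z j) with hG'_def
  have hG'form : ∀ z : ℕ → ℝ, G' z =
      ∑ j ∈ Finset.Icc 1 m, (z j - (fun t => - y t) j) ^ 2
        + lam * (|z 1 - (-a)| + |z m - (-b)| +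
          ∑ j ∈ Finset.Icc 1 (m - 1), |z j - z (j + 1)|) := by
    intro z
    rw [hG'_def]
    simp only []
    rw [hG (fun j => - z j)]
    congr 1
    · exact Finset.sum_congr rfl (fun j _ => by ring)
    · congr 1
      congr 1
      · congr 1
        · rw [show (-z 1 - a : ℝ) = -(z 1 - -a) by ring, abs_neg]
        · rw [show (-z m - b : ℝ) = -(z m - -b) by ring, abs_neg]
      · exact Finset.sum_congr rfl (fun j _ => by
          rw [show (-z j - -z (j + 1) : ℝ) = -(z j - z (j + 1)) by ring, abs_neg])
  have hy2 : ∀ k l : ℕ, 1 ≤ k → k ≤ l → l ≤ m →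
      |∑ j ∈ Finset.Icc k l, (fun t => - y t) j| ≤ My * Real.sqrt (l - k + 1) := by
    intro k l h1 h2 h3
    simp only [Finset.sum_neg_distrib, abs_neg]
    exact hy k l h1 h2 h3
  have hmin' : ∀ z : ℕ → ℝ, G' (fun j => - xh j) ≤ G' z := by
    intro z
    have hxx : (fun j => - - xh j) = xh := by funext j; ring
    simp only [hG'_def, hxx]
    exact hmin _
  have ha' : (-a) ≠ 0 := neg_ne_zero.mpr ha
  have hb' : (-b) ≠ 0 := neg_ne_zero.mpr hb
  have hsign' : Real.sign (-a) ≠ Real.sign (-b) := by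
    rw [Real.sign_neg, Real.sign_neg]
    exact fun h => hsign (neg_injective h)
  have hlower := fused_key m hm (fun t => - y t) (-a) (-b) lam My hlam hMy ha' hb' hsign'
    hy2 G' hG'form (fun j => - xh j) hmin' i hi1 him
  rw [abs_le]
  constructor
  · linarith [hlower]
  · exact hupper
end

section
/- Let ε_1,...,ε_n be i.i.d. random vectors in ℝ^p, each with distribution N(0, σ²·I_p), let t > 0, and set M_y = σ·max(√(8(log n + log t) + p), 2√p). Then with probability at least 1 − 1/t², for all pairs 1 ≤ k ≤ l ≤ n one has ‖∑_{i=k}^{l} ε_i‖ ≤ M_y·√(l−k+1), where ‖·‖ is the Euclidean norm on ℝ^p. -/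
open Finset MeasureTheory ProbabilityTheory Real
open scoped NNReal ENNReal



lemma sq_complete (b u : ℝ) (hb : 0 < b) (x : ℝ) :
    -b * x ^ 2 + u * x = -b * (x - u / (2 * b)) ^ 2 + u ^ 2 / (4 * b) := by
  field_simp
  ring

lemma integrable_exp_neg_mul_sq_add (b u : ℝ) (hb : 0 < b) :
    Integrable (fun x => Real.exp (-b * x ^ 2 + u * x)) := by
  have h : (fun x => Real.exp (-b * x ^ 2 + u * x)) =
      fun x => Real.exp (u ^ 2 / (4 * b)) * Real.exp (-b * (x - u / (2 * b)) ^ 2) := by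
    funext x
    rw [← Real.exp_add]
    congr 1
    rw [sq_complete b u hb x]; ring
  rw [h]
  exact ((integrable_exp_neg_mul_sq hb).comp_sub_right (u / (2 * b))).const_mul _

lemma integral_exp_neg_mul_sq_add (b u : ℝ) (hb : 0 < b) :
    ∫ x, Real.exp (-b * x ^ 2 + u * x) =
      Real.sqrt (π / b) * Real.exp (u ^ 2 / (4 * b)) := by
  have h : (fun x => Real.exp (-b * x ^ 2 + u * x)) =
      fun x => Real.exp (u ^ 2 / (4 * b)) * Real.exp (-b * (x - u / (2 * b)) ^ 2) := by
    funext x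
    rw [← Real.exp_add]
    congr 1
    rw [sq_complete b u hb x]; ring
  rw [h, MeasureTheory.integral_const_mul,
    integral_sub_right_eq_self (fun y => Real.exp (-b * y ^ 2)) (u / (2 * b)),
    integral_gaussian]
  ring



lemma withDensity_gaussianPDF_eq (v : ℝ≥0) :
    (volume.withDensity fun x => ENNReal.ofReal (gaussianPDFReal 0 v x)) =
      volume.withDensity fun x => ((Real.toNNReal (gaussianPDFReal 0 v x) : ℝ≥0) : ℝ≥0∞) :=
  rfl

lemma integral_gaussianReal_eq (v : ℝ≥0) (hv : v ≠ 0) (g : ℝ → ℝ) :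
    ∫ x, g x ∂(gaussianReal 0 v) = ∫ x, gaussianPDFReal 0 v x * g x := by
  rw [gaussianReal_of_var_ne_zero _ hv, gaussianPDF_def, withDensity_gaussianPDF_eq,
    integral_withDensity_eq_integral_smul
      ((measurable_gaussianPDFReal 0 v).real_toNNReal) g]
  congr 1
  funext x
  rw [NNReal.smul_def, Real.coe_toNNReal _ (gaussianPDFReal_nonneg 0 v x), smul_eq_mul]

lemma integrable_gaussianReal_iff (v : ℝ≥0) (hv : v ≠ 0) (g : ℝ → ℝ) :
    Integrable g (gaussianReal 0 v) ↔ Integrable (fun x => gaussianPDFReal 0 v x * g x) := by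
  rw [gaussianReal_of_var_ne_zero _ hv, gaussianPDF_def, withDensity_gaussianPDF_eq,
    integrable_withDensity_iff_integrable_smul
      ((measurable_gaussianPDFReal 0 v).real_toNNReal)]
  constructor <;> intro h <;> refine h.congr (Filter.Eventually.of_forall fun x => ?_) <;>
    simp only [NNReal.smul_def, Real.coe_toNNReal _ (gaussianPDFReal_nonneg 0 v x), smul_eq_mul]






lemma gaussianReal_exp_aux (v : ℝ≥0) (hv : v ≠ 0) (u s : ℝ) (hs : s < (2 * (v : ℝ))⁻¹) :
    Integrable (fun x => Real.exp (u * x + s * x ^ 2)) (gaussianReal 0 v) ∧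
    ∫ x, Real.exp (u * x + s * x ^ 2) ∂(gaussianReal 0 v) =
      (Real.sqrt (2 * π * v))⁻¹ * (Real.sqrt (π / ((2 * (v : ℝ))⁻¹ - s)) *
        Real.exp (u ^ 2 / (4 * ((2 * (v : ℝ))⁻¹ - s)))) := by
  have hv' : (0 : ℝ) < v := by
    have := hv
    positivity
  set b : ℝ := (2 * (v : ℝ))⁻¹ - s with hb_def
  have hb : 0 < b := by simp only [hb_def]; linarith
  have hpt : (fun x => gaussianPDFReal 0 v x * Real.exp (u * x + s * x ^ 2)) =
      fun x => (Real.sqrt (2 * π * v))⁻¹ * Real.exp (-b * x ^ 2 + u * x) := by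
    funext x
    rw [gaussianPDFReal]
    rw [mul_assoc, ← Real.exp_add]
    congr 1
    rw [hb_def]
    field_simp
    ring
  constructor
  · rw [integrable_gaussianReal_iff v hv, hpt]
    exact (integrable_exp_neg_mul_sq_add b u hb).const_mul _
  · rw [integral_gaussianReal_eq v hv, hpt, MeasureTheory.integral_const_mul,
      integral_exp_neg_mul_sq_add b u hb]

lemma gaussianReal_mgf (v : ℝ≥0) (hv : v ≠ 0) (u : ℝ) :
    Integrable (fun x => Real.exp (u * x)) (gaussianReal 0 v) ∧
    ∫ x, Real.exp (u * x) ∂(gaussianReal 0 v) = Real.exp ((v : ℝ) * u ^ 2 / 2) := by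
  have hv' : (0 : ℝ) < v := by
    have := hv
    positivity
  have hs : (0 : ℝ) < (2 * (v : ℝ))⁻¹ := by positivity
  obtain ⟨hint, heq⟩ := gaussianReal_exp_aux v hv u 0 hs
  have e1 : (fun x => Real.exp (u * x + 0 * x ^ 2)) = fun x => Real.exp (u * x) := by
    funext x; ring_nf
  constructor
  · rw [← e1]; exact hint
  · have heq2 : ∫ x, Real.exp (u * x) ∂(gaussianReal 0 v) =
        (Real.sqrt (2 * π * v))⁻¹ * (Real.sqrt (π / ((2 * (v : ℝ))⁻¹ - 0)) *
          Real.exp (u ^ 2 / (4 * ((2 * (v : ℝ))⁻¹ - 0)))) := by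
      rw [← e1]; exact heq
    rw [heq2]
    have h1 : π / ((2 * (v : ℝ))⁻¹ - 0) = 2 * π * v := by
      field_simp; ring
    have h2 : u ^ 2 / (4 * ((2 * (v : ℝ))⁻¹ - 0)) = (v : ℝ) * u ^ 2 / 2 := by
      field_simp; ring
    rw [h1, h2, ← mul_assoc, inv_mul_cancel₀ (by positivity), one_mul]

lemma gaussianReal_exp_sq :
    Integrable (fun x => Real.exp ((3 / 8) * x ^ 2)) (gaussianReal 0 1) ∧
    ∫ x, Real.exp ((3 / 8) * x ^ 2) ∂(gaussianReal 0 1) = 2 := by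
  have hs : (3 / 8 : ℝ) < (2 * ((1 : ℝ≥0) : ℝ))⁻¹ := by norm_num
  obtain ⟨hint, heq⟩ := gaussianReal_exp_aux 1 one_ne_zero 0 (3 / 8) hs
  have e1 : (fun x => Real.exp (0 * x + (3 / 8) * x ^ 2)) =
      fun x => Real.exp ((3 / 8) * x ^ 2) := by
    funext x; ring_nf
  constructor
  · rw [← e1]; exact hint
  · have heq2 : ∫ x, Real.exp ((3 / 8) * x ^ 2) ∂(gaussianReal 0 1) =
        (Real.sqrt (2 * π * 1))⁻¹ * (Real.sqrt (π / ((2 * ((1:ℝ≥0) : ℝ))⁻¹ - 3 / 8)) *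
          Real.exp (0 ^ 2 / (4 * ((2 * ((1:ℝ≥0) : ℝ))⁻¹ - 3 / 8)))) := by
      rw [← e1]; exact heq
    rw [heq2]
    have h1 : π / ((2 * ((1:ℝ≥0) : ℝ))⁻¹ - 3 / 8) = 4 * (2 * π * 1) := by
      push_cast
      norm_num
      ring
    rw [h1]
    have h2 : Real.sqrt (4 * (2 * π * 1)) = 2 * Real.sqrt (2 * π * 1) := by
      rw [Real.sqrt_mul (by norm_num : (0:ℝ) ≤ 4)]
      norm_num
    rw [h2]
    have h3 : (0:ℝ) ^ 2 / (4 * ((2 * ((1:ℝ≥0) : ℝ))⁻¹ - 3 / 8)) = 0 := by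
      norm_num
    rw [h3, Real.exp_zero, mul_one]
    have hpos : (0:ℝ) < Real.sqrt (2 * π * 1) := Real.sqrt_pos.mpr (by positivity)
    field_simp




lemma map_gaussian_mgf {Ω : Type*} [MeasurableSpace Ω] {P : Measure Ω} {X : Ω → ℝ}
    (hX : Measurable X) (v : ℝ≥0) (hv : v ≠ 0)
    (hmap : Measure.map X P = gaussianReal 0 v) (u : ℝ) :
    Integrable (fun ω => Real.exp (u * X ω)) P ∧
    ∫ ω, Real.exp (u * X ω) ∂P = Real.exp ((v : ℝ) * u ^ 2 / 2) := by
  obtain ⟨hint, heq⟩ := gaussianReal_mgf v hv u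
  have hmeas : AEStronglyMeasurable (fun x => Real.exp (u * x)) (Measure.map X P) :=
    (Real.continuous_exp.comp (continuous_const.mul continuous_id)).aestronglyMeasurable
  constructor
  · have := (integrable_map_measure hmeas hX.aemeasurable).mp (by rwa [hmap])
    exact this
  · rw [← hmap, integral_map hX.aemeasurable hmeas] at heq
    exact heq

-- Type copy of ℝ carrying the standard Gaussian as its volume
def GS : Type := ℝ
instance : MeasurableSpace GS := inferInstanceAs (MeasurableSpace ℝ)
noncomputable instance : MeasureSpace GS := { volume := gaussianReal 0 1 }
instance : IsProbabilityMeasure (volume : Measure GS) :=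
  inferInstanceAs (IsProbabilityMeasure (gaussianReal 0 1))
def GS.toR : GS → ℝ := id
lemma GS.meas_toR : Measurable GS.toR := measurable_id
lemma GS.integral_eq (f : ℝ → ℝ) :
    ∫ x : GS, f (GS.toR x) = ∫ x : ℝ, f x ∂(gaussianReal 0 1) := rfl

set_option maxHeartbeats 1000000 in
lemma pair_bound {Ω : Type*} [MeasurableSpace Ω] (P : Measure Ω) [IsProbabilityMeasure P]
    (n p : ℕ) (σ : ℝ≥0) (hσ : 0 < σ)
    (ε : ℕ → Ω → EuclideanSpace ℝ (Fin p))
    (hmeas : ∀ i, Measurable (ε i))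
    (hindep : iIndepFun
      (fun ij : (Finset.Icc 1 n : Finset ℕ) × Fin p => fun ω => ε ij.1 ω ij.2) P)
    (hlaw : ∀ i : ℕ, 1 ≤ i → i ≤ n → ∀ j : Fin p,
      Measure.map (fun ω => ε i ω j) P = gaussianReal 0 (σ ^ 2))
    (k l : ℕ) (hk : 1 ≤ k) (hkl : k ≤ l) (hln : l ≤ n) (a : ℝ) (ha : 0 ≤ a) :
    (P {ω | a * ((Finset.Icc k l).card : ℝ) * (σ : ℝ) ^ 2 ≤
        ∑ j : Fin p, (∑ i ∈ Finset.Icc k l, ε i ω j) ^ 2}).toReal ≤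
      Real.exp (-(3 / 8) * a) * 2 ^ p := by
  have hσR : (0 : ℝ) < (σ : ℝ) := hσ
  set m : ℝ := ((Finset.Icc k l).card : ℝ) with hm_def
  have hm : (1 : ℝ) ≤ m := by
    have h1 : 1 ≤ (Finset.Icc k l).card := Finset.card_pos.mpr (Finset.nonempty_Icc.mpr hkl)
    rw [hm_def]
    exact_mod_cast h1
  have hm0 : (0 : ℝ) < m := lt_of_lt_of_le one_pos hm
  set c : ℝ := 3 / (8 * (σ : ℝ) ^ 2 * m) with hc_def
  have hc : 0 < c := by positivity
  set d : ℝ := Real.sqrt (2 * c) with hd_def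
  have hd2 : d ^ 2 = 2 * c := Real.sq_sqrt (by positivity)
  have hv : (σ ^ 2 : ℝ≥0) ≠ 0 := pow_ne_zero _ hσ.ne'
  have hvR : ((σ ^ 2 : ℝ≥0) : ℝ) = (σ : ℝ) ^ 2 := by push_cast; ring
  set T : Fin p → Ω → ℝ := fun j ω => ∑ i ∈ Finset.Icc k l, ε i ω j with hT_def
  have hcoord : ∀ (i : ℕ) (j : Fin p), Measurable fun ω => ε i ω j := fun i j =>
    (measurable_pi_apply j).comp ((WithLp.measurable_ofLp _ _).comp (hmeas i))
  have hTmeas : ∀ j, Measurable (T j) := fun j =>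
    Finset.measurable_sum _ fun i _ => hcoord i j
  set Y : Ω → ℝ := fun ω => ∑ j : Fin p, (T j ω) ^ 2 with hY_def
  -- the index finset
  set s : Finset ((Finset.Icc 1 n : Finset ℕ) × Fin p) :=
    Finset.univ.filter (fun ij => (ij.1 : ℕ) ∈ Finset.Icc k l) with hs_def
  have hsub : Finset.Icc k l ⊆ Finset.Icc 1 n := Finset.Icc_subset_Icc hk hln
  have sumid : ∀ F : ℕ → Fin p → ℝ,
      ∑ ij ∈ s, F (ij.1 : ℕ) ij.2 = ∑ j : Fin p, ∑ i ∈ Finset.Icc k l, F i j := by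
    intro F
    rw [hs_def, Finset.sum_filter, Fintype.sum_prod_type, Finset.sum_comm]
    refine Finset.sum_congr rfl fun j _ => ?_
    calc (∑ x : (Finset.Icc 1 n : Finset ℕ), if (x : ℕ) ∈ Finset.Icc k l then F (x : ℕ) j else 0)
        = ∑ i ∈ Finset.Icc 1 n, (if i ∈ Finset.Icc k l then F i j else 0) :=
          Finset.sum_coe_sort (Finset.Icc 1 n)
            (fun i => if i ∈ Finset.Icc k l then F i j else 0)
      _ = ∑ i ∈ (Finset.Icc 1 n).filter (· ∈ Finset.Icc k l), F i j :=
          (Finset.sum_filter _ _).symm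
      _ = ∑ i ∈ Finset.Icc k l, F i j := by
          rw [Finset.filter_mem_eq_inter, Finset.inter_eq_right.mpr hsub]
  -- Step A: inner mgf
  have stepA : ∀ z : Fin p → ℝ,
      Integrable (fun ω => Real.exp (∑ j : Fin p, (d * z j) * T j ω)) P ∧
      ∫ ω, Real.exp (∑ j : Fin p, (d * z j) * T j ω) ∂P =
        Real.exp ((3 / 8) * ∑ j : Fin p, (z j) ^ 2) := by
    intro z
    set W : ((Finset.Icc 1 n : Finset ℕ) × Fin p) → Ω → ℝ :=
      fun ij ω => (d * z ij.2) * ε ij.1 ω ij.2 with hW_def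
    have hW_eq : ∀ ω, ∑ j : Fin p, (d * z j) * T j ω = (∑ ij ∈ s, W ij) ω := by
      intro ω
      rw [Finset.sum_apply]
      rw [hW_def]
      rw [sumid (fun i j => (d * z j) * ε i ω j)]
      simp_rw [hT_def, Finset.mul_sum]
    have hWindep : iIndepFun W P :=
      hindep.comp (fun ij x => (d * z ij.2) * x) (fun ij => measurable_const_mul _)
    have hWmeas : ∀ ij, Measurable (W ij) := fun ij => (hcoord ij.1 ij.2).const_mul _
    have hlaw' : ∀ ij : (Finset.Icc 1 n : Finset ℕ) × Fin p,
        Measure.map (fun ω => ε (ij.1 : ℕ) ω ij.2) P = gaussianReal 0 (σ ^ 2) := by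
      intro ij
      have h1 := ij.1.2
      rw [Finset.mem_Icc] at h1
      exact hlaw _ h1.1 h1.2 ij.2
    have hWint : ∀ ij, Integrable (fun ω => Real.exp (1 * W ij ω)) P := by
      intro ij
      have h := (map_gaussian_mgf (hcoord ij.1 ij.2) _ hv (hlaw' ij) (d * z ij.2)).1
      refine h.congr (Filter.Eventually.of_forall fun ω => ?_)
      simp only [one_mul]
      rfl
    have hWmgf : ∀ ij, mgf (W ij) P 1 = Real.exp ((σ : ℝ) ^ 2 * (d * z ij.2) ^ 2 / 2) := by
      intro ij
      rw [mgf]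
      have := (map_gaussian_mgf (hcoord ij.1 ij.2) _ hv (hlaw' ij) (d * z ij.2)).2
      rw [← hvR]
      rw [← this]
      congr 1
      funext ω
      simp only [one_mul]
      rfl
    constructor
    · have hint := iIndepFun.integrable_exp_mul_sum hWindep hWmeas
        (s := s) (fun ij _ => hWint ij)
      refine hint.congr (Filter.Eventually.of_forall fun ω => ?_)
      simp only [one_mul]
      rw [← hW_eq ω]
    · have hmgf := iIndepFun.mgf_sum hWindep hWmeas s (t := 1)
      have lhs_eq : ∫ ω, Real.exp (∑ j : Fin p, (d * z j) * T j ω) ∂P =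
          mgf (∑ ij ∈ s, W ij) P 1 := by
        rw [mgf]
        congr 1
        funext ω
        simp only [one_mul]
        rw [hW_eq ω]
      rw [lhs_eq, hmgf]
      have : ∀ ij ∈ s, mgf (W ij) P 1 = Real.exp ((σ : ℝ) ^ 2 * (d * z ij.2) ^ 2 / 2) :=
        fun ij _ => hWmgf ij
      rw [Finset.prod_congr rfl this, ← Real.exp_sum]
      congr 1
      rw [sumid (fun i j => (σ : ℝ) ^ 2 * (d * z j) ^ 2 / 2)]
      have : ∀ j : Fin p, ∑ _i ∈ Finset.Icc k l, (σ : ℝ) ^ 2 * (d * z j) ^ 2 / 2 =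
          m * ((σ : ℝ) ^ 2 * (d * z j) ^ 2 / 2) := by
        intro j
        rw [Finset.sum_const, nsmul_eq_mul, hm_def]
      rw [Finset.sum_congr rfl fun j _ => this j, Finset.mul_sum]
      congr 1
      funext j
      have : m * ((σ : ℝ) ^ 2 * (d * z j) ^ 2 / 2) =
          (m * (σ : ℝ) ^ 2 * (d ^ 2 / 2)) * (z j) ^ 2 := by ring
      rw [this]
      have hσne : (σ : ℝ) ≠ 0 := hσR.ne'
      have hmne : m ≠ 0 := hm0.ne'
      have key : m * (σ : ℝ) ^ 2 * (d ^ 2 / 2) = 3 / 8 := by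
        rw [hd2, hc_def]
        field_simp
      rw [key]
  -- Step B: outer integral over the Gaussian pi space
  have stepB : ∀ ω : Ω,
      (∫ z : Fin p → GS, Real.exp (∑ j : Fin p, (d * GS.toR (z j)) * T j ω)) =
        Real.exp (c * Y ω) := by
    intro ω
    have h1 : (fun z : Fin p → GS => Real.exp (∑ j : Fin p, (d * GS.toR (z j)) * T j ω)) =
        fun z => ∏ j : Fin p, Real.exp ((d * T j ω) * GS.toR (z j)) := by
      funext z
      rw [← Real.exp_sum]
      congr 1
      exact Finset.sum_congr rfl fun j _ => by ring
    rw [h1, volume_pi, integral_fintype_prod_eq_prod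
      (fun j (x : GS) => Real.exp ((d * T j ω) * GS.toR x))]
    have h2 : ∀ j : Fin p, (∫ x : GS, Real.exp ((d * T j ω) * GS.toR x)) =
        Real.exp ((d * T j ω) ^ 2 / 2) := by
      intro j
      rw [GS.integral_eq (fun y => Real.exp ((d * T j ω) * y)),
        (gaussianReal_mgf 1 one_ne_zero (d * T j ω)).2]
      norm_num
    rw [Finset.prod_congr rfl fun j _ => h2 j, ← Real.exp_sum]
    congr 1
    rw [hY_def, Finset.mul_sum]
    refine Finset.sum_congr rfl fun j _ => ?_
    have h3 : (d * T j ω) ^ 2 / 2 = (d ^ 2 / 2) * (T j ω) ^ 2 := by ring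
    rw [h3, hd2]
    ring
  -- Step C: joint integrability
  have HuM : Measurable (fun q : (Fin p → GS) × Ω =>
      Real.exp (∑ j : Fin p, (d * GS.toR (q.1 j)) * T j q.2)) := by
    refine Real.measurable_exp.comp (Finset.measurable_sum _ fun j _ => Measurable.mul ?_ ?_)
    · exact (GS.meas_toR.comp ((measurable_pi_apply j).comp measurable_fst)).const_mul d
    · exact (hTmeas j).comp measurable_snd
  have hint_prod : Integrable (fun q : (Fin p → GS) × Ω =>
      Real.exp (∑ j : Fin p, (d * GS.toR (q.1 j)) * T j q.2))
      ((volume : Measure (Fin p → GS)).prod P) := by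
    rw [integrable_prod_iff HuM.aestronglyMeasurable]
    constructor
    · exact Filter.Eventually.of_forall fun z => (stepA fun j => GS.toR (z j)).1
    · have heq : (fun z : Fin p → GS =>
          ∫ ω, ‖Real.exp (∑ j : Fin p, (d * GS.toR (z j)) * T j ω)‖ ∂P) =
          fun z => ∏ j : Fin p, Real.exp ((3 / 8) * (GS.toR (z j)) ^ 2) := by
        funext z
        have hnorm : (fun ω => ‖Real.exp (∑ j : Fin p, (d * GS.toR (z j)) * T j ω)‖) =
            fun ω => Real.exp (∑ j : Fin p, (d * GS.toR (z j)) * T j ω) := by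
          funext ω
          rw [Real.norm_eq_abs, abs_of_pos (Real.exp_pos _)]
        rw [hnorm, (stepA fun j => GS.toR (z j)).2, Finset.mul_sum, ← Real.exp_sum]
      rw [heq]
      exact Integrable.fintype_prod
        (f := fun _ (x : GS) => Real.exp ((3 / 8) * (GS.toR x) ^ 2))
        (fun j => gaussianReal_exp_sq.1)
  -- Step D: integrability of exp (c * Y)
  have hint_cY : Integrable (fun ω => Real.exp (c * Y ω)) P := by
    have h := hint_prod.integral_prod_right
    refine h.congr (Filter.Eventually.of_forall fun ω => ?_)
    exact stepB ω
  -- Step E: the value of the mgf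
  have hEval : ∫ ω, Real.exp (c * Y ω) ∂P = 2 ^ p := by
    have swap := MeasureTheory.integral_integral_swap
      (f := fun (z : Fin p → GS) (ω : Ω) =>
        Real.exp (∑ j : Fin p, (d * GS.toR (z j)) * T j ω)) hint_prod
    have lhs_eq : (∫ z : Fin p → GS,
        ∫ ω, Real.exp (∑ j : Fin p, (d * GS.toR (z j)) * T j ω) ∂P) = 2 ^ p := by
      have h1 : (fun z : Fin p → GS =>
          ∫ ω, Real.exp (∑ j : Fin p, (d * GS.toR (z j)) * T j ω) ∂P) =
          fun z => ∏ j : Fin p, Real.exp ((3 / 8) * (GS.toR (z j)) ^ 2) := by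
        funext z
        rw [(stepA fun j => GS.toR (z j)).2, Finset.mul_sum, ← Real.exp_sum]
      rw [h1, volume_pi, integral_fintype_prod_eq_prod
        (fun _ (x : GS) => Real.exp ((3 / 8) * (GS.toR x) ^ 2))]
      have h2 : (∫ x : GS, Real.exp ((3 / 8) * (GS.toR x) ^ 2)) = 2 := by
        rw [GS.integral_eq (fun y => Real.exp ((3 / 8) * y ^ 2))]
        exact gaussianReal_exp_sq.2
      rw [Finset.prod_congr rfl fun j _ => h2, Finset.prod_const]
      simp
    have rhs_eq : (∫ ω, ∫ z : Fin p → GS,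
        Real.exp (∑ j : Fin p, (d * GS.toR (z j)) * T j ω) ∂(volume : Measure (Fin p → GS)) ∂P)
        = ∫ ω, Real.exp (c * Y ω) ∂P := by
      refine integral_congr_ae (Filter.Eventually.of_forall fun ω => ?_)
      exact stepB ω
    rw [← rhs_eq, ← swap, lhs_eq]
  -- Step F: Chernoff bound
  have hσne : (σ : ℝ) ≠ 0 := hσR.ne'
  have hmne : m ≠ 0 := hm0.ne'
  have hmgfY : mgf Y P c = 2 ^ p := by
    rw [mgf]
    exact hEval
  have chern := measure_ge_le_exp_mul_mgf (μ := P) (X := Y)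
    (a * m * (σ : ℝ) ^ 2) hc.le hint_cY
  rw [hmgfY] at chern
  have hsets : {ω | a * m * (σ : ℝ) ^ 2 ≤
      ∑ j : Fin p, (∑ i ∈ Finset.Icc k l, ε i ω j) ^ 2} =
      {ω | a * m * (σ : ℝ) ^ 2 ≤ Y ω} := rfl
  rw [hsets]
  refine chern.trans (le_of_eq ?_)
  congr 2
  rw [hc_def]
  field_simp

set_option maxHeartbeats 1000000 in
/-- Lemma 4.1: with probability at least `1 - 1/t²`, all partial sums of `n`
i.i.d. `N(0, σ² I_p)` random vectors are bounded in Euclidean norm by `M_y √(l-k+1)`,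
where `M_y = σ max(√(8(log n + log t) + p), 2√p)`. -/
theorem gaussian_vector_partial_sums_bound
    {Ω : Type*} [MeasurableSpace Ω] (P : Measure Ω) [IsProbabilityMeasure P]
    (n p : ℕ) (hn : 1 ≤ n) (hp : 1 ≤ p) (σ : ℝ≥0) (hσ : 0 < σ) (t : ℝ) (ht : 0 < t)
    (ε : ℕ → Ω → EuclideanSpace ℝ (Fin p))
    (hmeas : ∀ i, Measurable (ε i))
    -- all coordinates of `ε_1, …, ε_n` are independent, each `N(0, σ²)`:
    -- this encodes that `ε_1, …, ε_n` are i.i.d. `N(0, σ² I_p)`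
    (hindep : iIndepFun
      (fun ij : (Finset.Icc 1 n : Finset ℕ) × Fin p => fun ω => ε ij.1 ω ij.2) P)
    (hlaw : ∀ i : ℕ, 1 ≤ i → i ≤ n → ∀ j : Fin p,
      Measure.map (fun ω => ε i ω j) P = gaussianReal 0 (σ ^ 2))
    (My : ℝ)
    (hMy : My = σ * max (Real.sqrt (8 * (Real.log n + Real.log t) + p))
      (2 * Real.sqrt p)) :
    ENNReal.ofReal (1 - 1 / t ^ 2) ≤
      P {ω | ∀ k l : ℕ, 1 ≤ k → k ≤ l → l ≤ n →
        ‖∑ i ∈ Finset.Icc k l, ε i ω‖ ≤ My * Real.sqrt (l - k + 1)} := by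
  by_cases htt : t ≤ 1
  · -- trivial case: `1 - 1/t² ≤ 0`
    have h1 : (1 : ℝ) ≤ 1 / t ^ 2 := by
      rw [le_div_iff₀ (by positivity)]
      nlinarith
    rw [ENNReal.ofReal_eq_zero.mpr (by linarith)]
    exact zero_le
  push_neg at htt
  have hσR : (0 : ℝ) < (σ : ℝ) := hσ
  have hnR : (1 : ℝ) ≤ (n : ℝ) := by exact_mod_cast hn
  have hpR : (1 : ℝ) ≤ (p : ℝ) := by exact_mod_cast hp
  have hlogn : 0 ≤ Real.log n := Real.log_nonneg hnR
  have hlogt : 0 < Real.log t := Real.log_pos htt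
  set aa : ℝ := max (8 * (Real.log n + Real.log t) + (p : ℝ)) (4 * (p : ℝ)) with haa_def
  have haa_pos : 0 < aa := lt_of_lt_of_le (by linarith) (le_max_right _ _)
  have hMy_eq : My = (σ : ℝ) * Real.sqrt aa := by
    rw [hMy, haa_def]
    congr 1
    have hmono : Monotone Real.sqrt := fun a b h => Real.sqrt_le_sqrt h
    rw [hmono.map_max]
    congr 1
    rw [Real.sqrt_mul (by norm_num : (0:ℝ) ≤ 4), show Real.sqrt 4 = 2 by
      rw [show (4:ℝ) = 2 ^ 2 by norm_num, Real.sqrt_sq (by norm_num)]]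
  have hMy_nonneg : 0 ≤ My := by
    rw [hMy_eq]; positivity
  have hMy_sq : My ^ 2 = (σ : ℝ) ^ 2 * aa := by
    rw [hMy_eq, mul_pow, Real.sq_sqrt haa_pos.le]
  set β : ℝ := Real.exp (-(3 / 8) * aa) * 2 ^ p with hβ_def
  have hβ_pos : 0 < β := by positivity
  set Bad : ℕ → ℕ → Set Ω := fun k l =>
    {ω | ¬ ‖∑ i ∈ Finset.Icc k l, ε i ω‖ ≤ My * Real.sqrt ((l : ℝ) - (k : ℝ) + 1)}
    with hBad_def
  -- bound for each bad event
  have hBadBound : ∀ k l : ℕ, 1 ≤ k → l ≤ n → P (Bad k l) ≤ ENNReal.ofReal β := by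
    intro k l hk1 hln
    rcases le_or_gt k l with hkl | hlk
    · have hcard : ((Finset.Icc k l).card : ℝ) = (l : ℝ) - (k : ℝ) + 1 := by
        rw [Nat.card_Icc, Nat.cast_sub (by omega)]
        push_cast
        ring
      have hm' : (0 : ℝ) ≤ (l : ℝ) - (k : ℝ) + 1 := by
        rw [← hcard]; positivity
      have hsub : Bad k l ⊆ {ω | aa * ((Finset.Icc k l).card : ℝ) * (σ : ℝ) ^ 2 ≤
          ∑ j : Fin p, (∑ i ∈ Finset.Icc k l, ε i ω j) ^ 2} := by
        intro ω hω
        simp only [hBad_def, Set.mem_setOf_eq, not_le] at hω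
        simp only [Set.mem_setOf_eq]
        have hnorm_sq : ‖∑ i ∈ Finset.Icc k l, ε i ω‖ ^ 2 =
            ∑ j : Fin p, (∑ i ∈ Finset.Icc k l, ε i ω j) ^ 2 := by
          rw [EuclideanSpace.norm_eq, Real.sq_sqrt (by positivity)]
          refine Finset.sum_congr rfl fun j _ => ?_
          rw [Real.norm_eq_abs, sq_abs, WithLp.ofLp_sum, Finset.sum_apply j (Finset.Icc k l) (fun i => (ε i ω).ofLp)]
        calc aa * ((Finset.Icc k l).card : ℝ) * (σ : ℝ) ^ 2
            = My ^ 2 * ((l : ℝ) - (k : ℝ) + 1) := by rw [hMy_sq, hcard]; ring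
          _ = (My * Real.sqrt ((l : ℝ) - (k : ℝ) + 1)) ^ 2 := by
              rw [mul_pow, Real.sq_sqrt hm']
          _ ≤ ‖∑ i ∈ Finset.Icc k l, ε i ω‖ ^ 2 := by
              have h0 : 0 ≤ My * Real.sqrt ((l : ℝ) - (k : ℝ) + 1) := by positivity
              exact pow_le_pow_left₀ h0 hω.le 2
          _ = _ := hnorm_sq
      refine (measure_mono hsub).trans ?_
      refine (ENNReal.le_ofReal_iff_toReal_le (measure_ne_top _ _) hβ_pos.le).mpr ?_
      exact pair_bound P n p σ hσ ε hmeas hindep hlaw k l hk1 hkl hln aa haa_pos.le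
    · have hempty : Bad k l = ∅ := by
        ext ω
        simp only [hBad_def, Set.mem_setOf_eq, Set.mem_empty_iff_false, iff_false, not_not]
        rw [Finset.Icc_eq_empty (not_le.mpr hlk), Finset.sum_empty, norm_zero]
        positivity
      rw [hempty]
      simp
  set F : Finset (ℕ × ℕ) := Finset.Icc 1 n ×ˢ Finset.Icc 1 n with hF_def
  set U : Set Ω := ⋃ q ∈ F, Bad q.1 q.2 with hU_def
  set G : Set Ω := {ω | ∀ k l : ℕ, 1 ≤ k → k ≤ l → l ≤ n →
      ‖∑ i ∈ Finset.Icc k l, ε i ω‖ ≤ My * Real.sqrt ((l : ℝ) - (k : ℝ) + 1)} with hG_def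
  have hcover : (Set.univ : Set Ω) ⊆ G ∪ U := by
    intro ω _
    by_cases hωG : ω ∈ G
    · exact Or.inl hωG
    · refine Or.inr ?_
      simp only [hG_def, Set.mem_setOf_eq] at hωG
      push_neg at hωG
      obtain ⟨k, l, hk1, hkl, hln, hbad⟩ := hωG
      have hmem : (k, l) ∈ F := by
        rw [hF_def, Finset.mem_product, Finset.mem_Icc, Finset.mem_Icc]
        exact ⟨⟨hk1, hkl.trans hln⟩, ⟨hk1.trans hkl, hln⟩⟩
      have hωBad : ω ∈ Bad (k, l).1 (k, l).2 := by
        simp only [hBad_def, Set.mem_setOf_eq, not_le]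
        exact hbad
      exact Set.mem_biUnion hmem hωBad
  have hcardF : F.card = n * n := by
    rw [hF_def, Finset.card_product, Nat.card_Icc, Nat.add_sub_cancel]
  -- union bound
  have hPU : P U ≤ ENNReal.ofReal (1 / t ^ 2) := by
    have h1 : P U ≤ ∑ q ∈ F, P (Bad q.1 q.2) := measure_biUnion_finset_le F _
    have h2 : ∑ q ∈ F, P (Bad q.1 q.2) ≤ F.card • ENNReal.ofReal β := by
      refine Finset.sum_le_card_nsmul F _ _ fun q hq => ?_
      rw [hF_def, Finset.mem_product, Finset.mem_Icc, Finset.mem_Icc] at hq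
      exact hBadBound q.1 q.2 hq.1.1 hq.2.2
    have h3 : (F.card • ENNReal.ofReal β : ℝ≥0∞) = ENNReal.ofReal (F.card * β) := by
      rw [nsmul_eq_mul, ← ENNReal.ofReal_natCast F.card,
        ← ENNReal.ofReal_mul (by positivity)]
    have h4 : (F.card : ℝ) * β ≤ 1 / t ^ 2 := by
      rw [hcardF]
      push_cast
      have hn0 : (0 : ℝ) < (n : ℝ) := by linarith
      have e1 : ((n : ℝ) * (n : ℝ)) * β =
          Real.exp (Real.log n + Real.log n + (-(3 / 8) * aa) + p * Real.log 2) := by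
        rw [hβ_def, Real.exp_add, Real.exp_add, Real.exp_add, Real.exp_log hn0,
          Real.exp_nat_mul, Real.exp_log (by norm_num : (0:ℝ) < 2)]
        ring
      have e2 : 1 / t ^ 2 = Real.exp (-(2 * Real.log t)) := by
        rw [show (2 : ℝ) * Real.log t = Real.log (t ^ 2) by
            rw [Real.log_pow]; push_cast; ring,
          Real.exp_neg, Real.exp_log (by positivity)]
        rw [one_div]
      rw [e1, e2]
      refine Real.exp_le_exp.mpr ?_
      have h8 : 8 * (Real.log n + Real.log t) + (p : ℝ) ≤ aa := le_max_left _ _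
      have h4p : 4 * (p : ℝ) ≤ aa := le_max_right _ _
      have hlog2 : Real.log 2 < 0.75 := lt_trans Real.log_two_lt_d9 (by norm_num)
      have hp0 : (0 : ℝ) ≤ (p : ℝ) := by linarith
      nlinarith [mul_le_mul_of_nonneg_left hlog2.le hp0]
    calc P U ≤ F.card • ENNReal.ofReal β := h1.trans h2
      _ = ENNReal.ofReal (F.card * β) := h3
      _ ≤ ENNReal.ofReal (1 / t ^ 2) := ENNReal.ofReal_le_ofReal h4
  -- conclude
  have ht2 : 1 / t ^ 2 ≤ 1 := by
    rw [div_le_one (by positivity)]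
    nlinarith
  have hsum : ENNReal.ofReal (1 - 1 / t ^ 2) + ENNReal.ofReal (1 / t ^ 2) = 1 := by
    rw [← ENNReal.ofReal_add (by linarith) (by positivity), sub_add_cancel,
      ENNReal.ofReal_one]
  have h1 : (1 : ℝ≥0∞) ≤ P G + P U := by
    calc (1 : ℝ≥0∞) = P Set.univ := (measure_univ).symm
      _ ≤ P (G ∪ U) := measure_mono hcover
      _ ≤ P G + P U := measure_union_le G U
  have hfin : ENNReal.ofReal (1 / t ^ 2) ≠ ⊤ := ENNReal.ofReal_ne_top
  have hGgoal : ENNReal.ofReal (1 - 1 / t ^ 2) ≤ P G := by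
    refine (ENNReal.add_le_add_iff_right hfin).mp ?_
    rw [hsum]
    exact h1.trans (add_le_add_right hPU _)
  exact hGgoal
end

section
/- Let x̂ = (x̂_1,...,x̂_m) minimize the one-interval group fused lasso objective G(x_1,...,x_m) = ∑_{i=1}^m ‖x_i − y_i‖² + λ(‖a − x_1‖ + ‖x_m − b‖ + ∑_{i=1}^{m−1} ‖x_i − x_{i+1}‖) over (ℝ^p)^m, with the conventions x̂_0 = a and x̂_{m+1} = b. For indices i with x̂_i ≠ x̂_{i+1} define the unit vector u_i = (x̂_{i+1} − x̂_i)/‖x̂_{i+1} − x̂_i‖. Then for any 1 ≤ k ≤ l ≤ m with x̂_{k−1} ≠ x̂_k and x̂_l ≠ x̂_{l+1}, one has 2·∑_{i=k}^{l} (x̂_i − y_i) + λ·(u_{k−1} − u_l) = 0. -/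
open Finset RealInnerProductSpace

variable {E : Type*} [NormedAddCommGroup E] [InnerProductSpace ℝ E]

lemma gfl_hasDerivAt_sq (c d : E) :
    HasDerivAt (fun t : ℝ => ‖c + t • d‖ ^ 2) (2 * ⟪c, d⟫) 0 := by
  have heq : (fun t : ℝ => ‖c + t • d‖ ^ 2)
      = fun t : ℝ => ‖c‖ ^ 2 + 2 * ⟪c, d⟫ * t + ‖d‖ ^ 2 * t ^ 2 := by
    funext t
    rw [norm_add_sq_real, real_inner_smul_right, norm_smul]
    simp [mul_pow]
    ring
  rw [heq]
  have h1 : HasDerivAt (fun t : ℝ => 2 * ⟪c, d⟫ * t) (2 * ⟪c, d⟫) 0 :=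
    by simpa using (hasDerivAt_id (0:ℝ)).const_mul (2 * ⟪c, d⟫)
  have h2 : HasDerivAt (fun t : ℝ => ‖d‖ ^ 2 * t ^ 2) (‖d‖ ^ 2 * (2 * 0 ^ 1)) 0 :=
    (hasDerivAt_pow 2 (0:ℝ)).const_mul _
  refine (((hasDerivAt_const (0:ℝ) (‖c‖^2)).add h1).add h2).congr_deriv ?_
  simp

lemma gfl_hasDerivAt_norm (c d : E) (hc : c ≠ 0) :
    HasDerivAt (fun t : ℝ => ‖c + t • d‖) (⟪c, d⟫ / ‖c‖) 0 := by
  have heq : (fun t : ℝ => ‖c + t • d‖)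
      = fun t : ℝ => Real.sqrt (‖c + t • d‖ ^ 2) := by
    funext t; rw [Real.sqrt_sq (norm_nonneg _)]
  rw [heq]
  have hne : ‖c + (0:ℝ) • d‖ ^ 2 ≠ 0 := by simp [hc]
  have := (gfl_hasDerivAt_sq c d).sqrt hne
  convert this using 1
  rw [show ‖c + (0:ℝ) • d‖ = ‖c‖ by simp]
  rw [Real.sqrt_sq (norm_nonneg c)]
  ring

lemma gfl_sum_split (f : ℕ → ℝ) (m : ℕ) (hm : 1 ≤ m) :
    ∑ i ∈ Finset.Icc 0 m, f i = f 0 + (f m + ∑ i ∈ Finset.Icc 1 (m-1), f i) := by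
  have h1 : Finset.Icc 0 m = insert 0 (Finset.Icc 1 m) := by
    ext x; simp [Finset.mem_Icc]; omega
  have h2 : Finset.Icc 1 m = insert m (Finset.Icc 1 (m-1)) := by
    ext x; simp [Finset.mem_Icc]; omega
  rw [h1, Finset.sum_insert (by simp), h2, Finset.sum_insert (by simp [Finset.mem_Icc]; omega)]

/-- Lemma 4.3: first-order condition for the one-interval group fused lasso:
`2 ∑_{i=k}^{l} (x̂_i - y_i) + λ (u_{k-1} - u_l) = 0` whenever `x̂_{k-1} ≠ x̂_k` and
`x̂_l ≠ x̂_{l+1}`, where `u_i = (x̂_{i+1} - x̂_i)/‖x̂_{i+1} - x̂_i‖`. -/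
theorem group_fused_lasso_first_order_condition
    (p m : ℕ) (hp : 1 ≤ p) (hm : 1 ≤ m)
    (y : ℕ → EuclideanSpace ℝ (Fin p)) (a b : EuclideanSpace ℝ (Fin p))
    (lam : ℝ) (hlam : 0 < lam)
    (G : (ℕ → EuclideanSpace ℝ (Fin p)) → ℝ)
    (hG : ∀ z : ℕ → EuclideanSpace ℝ (Fin p), G z =
      ∑ i ∈ Finset.Icc 1 m, ‖z i - y i‖ ^ 2
        + lam * (‖a - z 1‖ + ‖z m - b‖ + ∑ i ∈ Finset.Icc 1 (m - 1), ‖z i - z (i + 1)‖))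
    (xh : ℕ → EuclideanSpace ℝ (Fin p))
    (hmin : ∀ z : ℕ → EuclideanSpace ℝ (Fin p), G xh ≤ G z)
    (ha : xh 0 = a) (hb : xh (m + 1) = b)
    (u : ℕ → EuclideanSpace ℝ (Fin p))
    (hu : ∀ i : ℕ, xh i ≠ xh (i + 1) → u i = ‖xh (i + 1) - xh i‖⁻¹ • (xh (i + 1) - xh i)) :
    ∀ k l : ℕ, 1 ≤ k → k ≤ l → l ≤ m →
      xh (k - 1) ≠ xh k → xh l ≠ xh (l + 1) →
      (2 : ℝ) • (∑ i ∈ Finset.Icc k l, (xh i - y i)) + lam • (u (k - 1) - u l) = 0 := by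
  intro k l hk hkl hlm hedge1 hedge2
  classical
  set S : EuclideanSpace ℝ (Fin p) :=
    (2 : ℝ) • (∑ i ∈ Finset.Icc k l, (xh i - y i)) + lam • (u (k - 1) - u l) with hS
  have hk1 : k - 1 + 1 = k := by omega
  have key : ∀ v : EuclideanSpace ℝ (Fin p), ⟪S, v⟫ = 0 := by
    intro v
    set w : ℕ → EuclideanSpace ℝ (Fin p) :=
      fun i => if i ∈ Finset.Icc k l then v else 0 with hw
    have hw0 : w 0 = 0 := by simp only [hw, Finset.mem_Icc]; rw [if_neg (by omega)]
    have hwm1 : w (m + 1) = 0 := by simp only [hw, Finset.mem_Icc]; rw [if_neg (by omega)]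
    have hwk1 : w (k - 1) = 0 := by simp only [hw, Finset.mem_Icc]; rw [if_neg (by omega)]
    have hwk : w k = v := by simp only [hw, Finset.mem_Icc]; rw [if_pos (by omega)]
    have hwl : w l = v := by simp only [hw, Finset.mem_Icc]; rw [if_pos (by omega)]
    have hwl1 : w (l + 1) = 0 := by simp only [hw, Finset.mem_Icc]; rw [if_neg (by omega)]
    have hwdiff : ∀ i : ℕ, i ≠ k - 1 → i ≠ l → w i - w (i + 1) = 0 := by
      intro i h1 h2
      have hiff : i ∈ Finset.Icc k l ↔ i + 1 ∈ Finset.Icc k l := by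
        simp only [Finset.mem_Icc]; omega
      simp only [hw]
      rw [if_congr hiff rfl rfl, sub_self]
    set F1 : ℝ → ℝ := fun t => ∑ i ∈ Finset.Icc 1 m, ‖(xh i - y i) + t • w i‖ ^ 2 with hF1
    set F2 : ℝ → ℝ := fun t =>
      ∑ i ∈ Finset.Icc 0 m, ‖(xh i - xh (i + 1)) + t • (w i - w (i + 1))‖ with hF2
    set φ : ℝ → ℝ := fun t => F1 t + lam * F2 t with hφdef
    have hφ : ∀ t : ℝ, φ t = G (fun i => xh i + t • w i) := by
      intro t
      rw [hG]
      simp only [hφdef, hF1, hF2]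
      congr 1
      · apply Finset.sum_congr rfl
        intro i _
        congr 1
        abel_nf
      · rw [gfl_sum_split _ m hm]
        have e0 : ‖(xh 0 - xh 1) + t • (w 0 - w 1)‖ = ‖a - (xh 1 + t • w 1)‖ := by
          rw [hw0, ha]; congr 1; rw [smul_sub, smul_zero]; abel
        have em : ‖(xh m - xh (m + 1)) + t • (w m - w (m + 1))‖
            = ‖(xh m + t • w m) - b‖ := by
          rw [hwm1, hb]; congr 1; rw [smul_sub, smul_zero]; abel
        rw [e0, em]
        have hsum : ∑ x ∈ Finset.Icc 1 (m-1), ‖xh x - xh (x+1) + t • (w x - w (x+1))‖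
            = ∑ x ∈ Finset.Icc 1 (m-1), ‖xh x + t • w x - (xh (x+1) + t • w (x+1))‖ := by
          apply Finset.sum_congr rfl
          intro i _
          congr 1
          rw [smul_sub]; abel
        rw [hsum]; ring
    -- local min
    have hlmin : IsLocalMin φ 0 := by
      apply Filter.Eventually.of_forall
      intro t
      have h0 : (fun i => xh i + (0:ℝ) • w i) = xh := by funext i; simp
      rw [hφ, hφ, h0]
      exact hmin _
    -- derivative
    have hD1 : HasDerivAt F1 (∑ i ∈ Finset.Icc 1 m, 2 * ⟪xh i - y i, w i⟫) 0 :=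
      HasDerivAt.fun_sum fun i _ => gfl_hasDerivAt_sq _ _
    set δ : ℕ → ℝ := fun i =>
      ⟪xh i - xh (i + 1), w i - w (i + 1)⟫ / ‖xh i - xh (i + 1)‖ with hδ
    have hD2 : HasDerivAt F2 (∑ i ∈ Finset.Icc 0 m, δ i) 0 := by
      apply HasDerivAt.fun_sum
      intro i _
      by_cases hd : w i - w (i + 1) = 0
      · have : δ i = 0 := by rw [hδ]; simp [hd]
        rw [this, hd]
        simpa using hasDerivAt_const (0:ℝ) ‖xh i - xh (i + 1)‖
      · have hil : i = k - 1 ∨ i = l := by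
          by_contra h
          push_neg at h
          exact hd (hwdiff i h.1 h.2)
        have hc : xh i - xh (i + 1) ≠ 0 := by
          rcases hil with h | h
          · subst h; rw [hk1]; exact sub_ne_zero.mpr hedge1
          · subst h; exact sub_ne_zero.mpr hedge2
        exact gfl_hasDerivAt_norm _ _ hc
    have hDφ : HasDerivAt φ
        ((∑ i ∈ Finset.Icc 1 m, 2 * ⟪xh i - y i, w i⟫)
          + lam * ∑ i ∈ Finset.Icc 0 m, δ i) 0 :=
      hD1.add (hD2.const_mul lam)
    have hzero := hlmin.hasDerivAt_eq_zero hDφ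
    -- identify the derivative with ⟪S, v⟫
    have hd1 : (∑ i ∈ Finset.Icc 1 m, 2 * ⟪xh i - y i, w i⟫)
        = ⟪(2:ℝ) • (∑ i ∈ Finset.Icc k l, (xh i - y i)), v⟫ := by
      rw [real_inner_smul_left, sum_inner, Finset.mul_sum]
      rw [show (∑ i ∈ Finset.Icc 1 m, 2 * ⟪xh i - y i, w i⟫)
          = ∑ i ∈ Finset.Icc 1 m, (if i ∈ Finset.Icc k l then 2 * ⟪xh i - y i, v⟫ else 0) by
        apply Finset.sum_congr rfl
        intro i _
        by_cases h : i ∈ Finset.Icc k l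
        · rw [if_pos h]; simp only [hw, if_pos h]
        · rw [if_neg h]; simp only [hw, if_neg h]; simp]
      rw [Finset.sum_ite_mem]
      congr 1
      ext x
      simp only [Finset.mem_inter, Finset.mem_Icc]
      omega
    have hd2 : (∑ i ∈ Finset.Icc 0 m, δ i) = ⟪u (k - 1), v⟫ - ⟪u l, v⟫ := by
      rw [Finset.sum_eq_add_of_mem (k - 1) l (by simp [Finset.mem_Icc]; omega)
        (by simp [Finset.mem_Icc]; omega) (by omega)
        (fun c _ hc => by rw [hδ]; simp [hwdiff c hc.1 hc.2])]
      have h1 : δ (k - 1) = ⟪u (k - 1), v⟫ := by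
        rw [hδ]
        simp only [hk1, hwk1, hwk, zero_sub]
        rw [hu (k - 1) (by rw [hk1]; exact hedge1), hk1]
        rw [real_inner_smul_left, norm_sub_rev (xh (k-1))]
        rw [show xh (k - 1) - xh k = -(xh k - xh (k - 1)) by abel, inner_neg_neg]
        rw [div_eq_inv_mul]
      have h2 : δ l = -⟪u l, v⟫ := by
        rw [hδ]
        simp only [hwl, hwl1, sub_zero]
        rw [hu l hedge2]
        rw [real_inner_smul_left, norm_sub_rev (xh l)]
        rw [show xh l - xh (l + 1) = -(xh (l + 1) - xh l) by abel, inner_neg_left]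
        rw [div_eq_inv_mul]
        ring
      rw [h1, h2]; ring
    rw [hd1, hd2] at hzero
    rw [hS, inner_add_left, real_inner_smul_left (u (k-1) - u l), inner_sub_left]
    linarith [hzero]
  have := key S
  exact inner_self_eq_zero.mp this
end
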